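/- arXiv:2208.00421 — 6 statements merged into one kernel-verified Lean document; each statement's English description precedes it below -/
import Mathlib

section
/- Let ω_V = (i/2) ω₃ ∧ ω̄₃ be the 'vertical' 2-form on ℂ³, where (ω₁,ω₂,ω₃) is the dual basis of the standard basis of ℂ³. Then the restriction of ω_V to the real 3-plane W_θ = T_θ(ℝ³) has pointwise norm (1/2)|cos(2θ)|. Equivalently, if e₁,e₂,e₃ is the image of the standard orthonormal basis of ℝ³ under T_θ, then |ω_V(e₂,e₃)| = (1/2)|cos 2θ|. -/
open Complex

/-- The matrix `T_θ ∈ SU(3)`. -/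
noncomputable def Tmat (θ : ℝ) : Matrix (Fin 3) (Fin 3) ℂ :=
  !![1, 0, 0;
     0, -I * exp (-(θ : ℂ) * I) / (Real.sqrt 2 : ℂ), exp ((θ : ℂ) * I) / (Real.sqrt 2 : ℂ);
     0, -exp (-(θ : ℂ) * I) / (Real.sqrt 2 : ℂ), I * exp ((θ : ℂ) * I) / (Real.sqrt 2 : ℂ)]

/-- The vertical 2-form `ω_V = (i/2) ω₃ ∧ ω̄₃` evaluated on a pair of vectors of `ℂ³`:
`ω_V(u,v) = (i/2)(u₃ v̄₃ − v₃ ū₃)`, which is a real number. -/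
noncomputable def omegaV (u v : Fin 3 → ℂ) : ℝ :=
  ((I / 2) * (u 2 * star (v 2) - v 2 * star (u 2))).re

/-- The `j`-th column of `T_θ`, i.e. the image of the `j`-th standard basis vector of `ℝ³`. -/
noncomputable def col (θ : ℝ) (j : Fin 3) : Fin 3 → ℂ := fun i => Tmat θ i j

/-- the restriction of `ω_V` to `W_θ = T_θ(ℝ³)` has norm `(1/2)|cos 2θ|`:
`|ω_V(e₂, e₃)| = (1/2)|cos 2θ|` where `e₂, e₃` are the images of the last two standard basis
vectors. -/
theorem stmt_5 (θ : ℝ) : |omegaV (col θ 1) (col θ 2)| = (1 / 2) * |Real.cos (2 * θ)| := by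
  have : omegaV (col θ 1) (col θ 2) = -(Real.cos (2*θ))/2 := by
    simp only [omegaV, col, Tmat, Matrix.cons_val', Matrix.cons_val_zero, Matrix.cons_val_one,
      Matrix.head_cons, Matrix.cons_val_two, Matrix.tail_cons, Matrix.empty_val',
      Matrix.cons_val_fin_one, Matrix.head_fin_const]
    rw [show (2*θ : ℝ) = θ + θ by ring, Real.cos_add]
    simp [Complex.ext_iff, Complex.exp_re, Complex.exp_im, Complex.div_re, Complex.div_im,
      Complex.normSq, Real.exp_zero, mul_comm, mul_assoc, mul_left_comm]
    ring_nf
    rw [Real.sq_sqrt (by norm_num : (0:ℝ) ≤ 2)]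
    ring
  rw [this]
  rw [abs_div, abs_neg]
  simp [_root_.abs_of_nonneg]
  ring
end

section
/- Let V_θ = span_ℝ(−i e^{−iθ} b₂ − e^{−iθ} b₃, e^{iθ} b₂ + i e^{iθ} b₃) ⊂ ℂ² = span_ℂ(b₂,b₃). Then V_θ is invariant under the real-linear endomorphism J'(b₂,b₃) = (i b₂, −i b₃) if and only if θ = 0 (for θ ∈ [0, π/4]). -/
open Complex

/-- First spanning vector of `V_θ`: `−i e^{−iθ} b₂ − e^{−iθ} b₃`. -/
noncomputable def v1 (θ : ℝ) : Fin 2 → ℂ :=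
  ![-I * exp (-(θ : ℂ) * I), -exp (-(θ : ℂ) * I)]

/-- Second spanning vector of `V_θ`: `e^{iθ} b₂ + i e^{iθ} b₃`. -/
noncomputable def v2 (θ : ℝ) : Fin 2 → ℂ :=
  ![exp ((θ : ℂ) * I), I * exp ((θ : ℂ) * I)]

/-- The real 2-plane `V_θ ⊂ ℂ²`. -/
noncomputable def Vsp (θ : ℝ) : Submodule ℝ (Fin 2 → ℂ) :=
  Submodule.span ℝ {v1 θ, v2 θ}

/-- for `θ ∈ [0, π/4]`, the plane `V_θ` is invariant under the real-linear map
`J'(b₂,b₃) = (i b₂, −i b₃)` if and only if `θ = 0`. -/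
theorem stmt_8 (θ : ℝ) (hθ : θ ∈ Set.Icc 0 (Real.pi / 4)) :
    (∀ v ∈ Vsp θ, (![I * v 0, -I * v 1]) ∈ Vsp θ) ↔ θ = 0 := by
  constructor
  · intro h
    have hv1 : v1 θ ∈ Vsp θ := Submodule.subset_span (by left; rfl)
    have h1 := h _ hv1
    rw [Vsp, Submodule.mem_span_pair] at h1
    obtain ⟨a, b, hab⟩ := h1
    have e0 := congrFun hab 0
    have e1 := congrFun hab 1
    simp only [v1, v2, Pi.add_apply, Pi.smul_apply, Matrix.cons_val_zero,
      Matrix.cons_val_one, Matrix.head_cons, smul_eq_mul, Complex.real_smul] at e0 e1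
    set E := exp (-(θ : ℂ) * I) with hE
    set F := exp ((θ : ℂ) * I) with hF
    have hEne : E ≠ 0 := Complex.exp_ne_zero _
    have hEF : E * F = 1 := by rw [hE, hF, ← Complex.exp_add]; ring_nf; exact Complex.exp_zero
    have haE : (a : ℂ) * E = 0 := by
      have hI : (I:ℂ)^2 = -1 := Complex.I_sq
      linear_combination (I * e0 - e1) / 2 + ((a : ℂ) * E / 2 - E * I / 2) * hI
    have ha : (a : ℂ) = 0 := by
      rcases mul_eq_zero.mp haE with h | h
      · exact h
      · exact absurd h hEne
    have hbF : (b : ℂ) * F = E := by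
      have hI : (I:ℂ)^2 = -1 := Complex.I_sq
      linear_combination e0 - (-I * E) * ha + (-E) * hI
    have hbEE : (b : ℂ) = E * E := by
      have := congrArg (· * E) hbF
      calc (b : ℂ) = (b:ℂ) * (F * E) := by rw [mul_comm F E, hEF, mul_one]
        _ = E * E := by linear_combination this - (b:ℂ)*0
    have hexp : (b : ℂ) = exp (((-(2*θ) : ℝ) : ℂ) * I) := by
      rw [hbEE, hE, ← Complex.exp_add]; push_cast; ring_nf
    have him := congrArg Complex.im hexp
    rw [Complex.exp_ofReal_mul_I_im, Complex.ofReal_im] at him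
    rw [Real.sin_neg] at him
    have hsin : Real.sin (2 * θ) = 0 := by linarith
    by_contra hne
    obtain ⟨h0, h4⟩ := hθ
    have hpos : 0 < 2 * θ := by
      rcases lt_or_eq_of_le h0 with h | h
      · linarith
      · exact absurd h.symm hne
    have hlt : 2 * θ < Real.pi := by
      have := Real.pi_pos
      linarith
    exact absurd hsin (ne_of_gt (Real.sin_pos_of_pos_of_lt_pi hpos hlt))
  · rintro rfl v hv
    induction hv using Submodule.span_induction with
    | mem x hx =>
      rcases hx with rfl | rfl
      · have : (![I * v1 0 0, -I * v1 0 1]) = v2 0 := by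
          funext i; fin_cases i <;> simp [v1, v2] <;> ring
        rw [this]
        exact Submodule.subset_span (by right; rfl)
      · have : (![I * v2 0 0, -I * v2 0 1]) = (-1 : ℝ) • v1 0 := by
          funext i; fin_cases i <;> simp [v1, v2] <;> ring
        rw [this]
        exact Submodule.smul_mem _ _ (Submodule.subset_span (by left; rfl))
    | zero =>
      have : (![I * (0 : Fin 2 → ℂ) 0, -I * (0 : Fin 2 → ℂ) 1]) = 0 := by
        funext i; fin_cases i <;> simp
      rw [this]; exact Submodule.zero_mem _
    | add u w hu hw ihu ihw =>
      have : (![I * (u + w) 0, -I * (u + w) 1])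
          = (![I * u 0, -I * u 1]) + (![I * w 0, -I * w 1]) := by
        funext i; fin_cases i <;> simp <;> ring
      rw [this]; exact Submodule.add_mem _ ihu ihw
    | smul c u hu ihu =>
      have : (![I * (c • u) 0, -I * (c • u) 1]) = c • (![I * u 0, -I * u 1]) := by
        funext i; fin_cases i <;> simp [Complex.real_smul] <;> ring
      rw [this]; exact Submodule.smul_mem _ _ ihu
end

section
/- Let SU(2) act on a manifold M preserving a 2-form ω and a function-valued setup as follows: let K¹,K²,K³ be the fundamental vector fields of a basis ξ₁,ξ₂,ξ₃ of 𝔰𝔲(2) with [ξᵢ,ξⱼ] = −ε_{ijk} ξ_k, define μ = (ω(K²,K³), ω(K³,K¹), ω(K¹,K²)) and ν = Im ψ(K¹,K²,K³) on a nearly Kähler 6-manifold. If at a point x one has ν(x) ≠ 0 and μ(x) = 0, then the SU(2)-orbit through x is a 3-dimensional special Lagrangian submanifold; conversely every 3-dimensional SU(2)-orbit that is special Lagrangian satisfies μ = 0 and ν ≠ 0 along it. -/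
open Matrix

private lemma alt_expand {E : Type*} [AddCommGroup E] [Module ℝ E] {n : ℕ}
    (f : AlternatingMap ℝ E ℝ (Fin n)) (c : Fin n → Fin 3 → ℝ) (v : Fin 3 → E) :
    (f fun i => ∑ j, c i j • v j)
      = ∑ r : Fin n → Fin 3, (∏ i, c i (r i)) • f fun i => v (r i) := by
  rw [show (f fun i => ∑ j, c i j • v j)
      = f.toMultilinearMap fun i => ∑ j, c i j • v j from rfl,
    MultilinearMap.map_sum]
  exact Finset.sum_congr rfl fun r _ => f.toMultilinearMap.map_smul_univ _ _

/-- Let `SU(2)` act on a nearly Kähler 6-manifold `M` by nearly Kähler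
automorphisms, with fundamental vector fields `K¹,K²,K³` of a standard basis of `𝔰𝔲(2)`
(so that the differential of the action transforms the `Kⁱ` by the adjoint representation
`Adm : SU(2) → SO(3)`), and let `ω`, `Re ψ`, `Im ψ` be the invariant nearly Kähler forms,
viewed on each tangent space `E x`.  Define `μ = (ω(K²,K³), ω(K³,K¹), ω(K¹,K²))` and
`ν = Im ψ(K¹,K²,K³)`.  Then the orbit through `x` is a 3-dimensional special Lagrangian
submanifold (the `Kⁱ` are everywhere linearly independent along it, `ω` vanishes on it, and
`ψ` restricts to a non-zero form) if and only if `ν(x) ≠ 0` and `μ(x) = 0`.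
(`Re ψ` vanishes on orbits by exactness, and `ψ` is nondegenerate: on any Lagrangian
3-plane the form `ψ` is non-zero; both facts enter as hypotheses `hRe`, `hψnd`.) -/
theorem stmt_12 {M : Type*} [MulAction (Matrix.specialUnitaryGroup (Fin 2) ℂ) M]
    (E : M → Type*) [∀ x, AddCommGroup (E x)] [∀ x, Module ℝ (E x)]
    (ω : ∀ x, AlternatingMap ℝ (E x) ℝ (Fin 2))
    (Reψ Imψ : ∀ x, AlternatingMap ℝ (E x) ℝ (Fin 3))
    (K : Fin 3 → ∀ x, E x)
    (dact : ∀ (g : Matrix.specialUnitaryGroup (Fin 2) ℂ) (x : M), E x ≃ₗ[ℝ] E (g • x))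
    (Adm : Matrix.specialUnitaryGroup (Fin 2) ℂ → Matrix (Fin 3) (Fin 3) ℝ)
    (hAd : ∀ g, Adm g * (Adm g)ᵀ = 1)
    (hK : ∀ g x i, dact g x (K i x) = ∑ j, Adm g j i • K j (g • x))
    (hω : ∀ g x u v, ω (g • x) ![dact g x u, dact g x v] = ω x ![u, v])
    (hImψ : ∀ g x u v w,
      Imψ (g • x) ![dact g x u, dact g x v, dact g x w] = Imψ x ![u, v, w])
    (hRe : ∀ y : M, Reψ y ![K 0 y, K 1 y, K 2 y] = 0)
    (hψnd : ∀ (y : M) (v : Fin 3 → E y), LinearIndependent ℝ v →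
      (∀ i j, ω y ![v i, v j] = 0) → Reψ y ![v 0, v 1, v 2] = 0 →
      Imψ y ![v 0, v 1, v 2] ≠ 0)
    (x : M) :
    (Imψ x ![K 0 x, K 1 x, K 2 x] ≠ 0 ∧ ∀ i j, ω x ![K i x, K j x] = 0) ↔
      ∀ y ∈ MulAction.orbit (Matrix.specialUnitaryGroup (Fin 2) ℂ) x,
        (LinearIndependent ℝ fun i => K i y) ∧ (∀ i j, ω y ![K i y, K j y] = 0) ∧
          Imψ y ![K 0 y, K 1 y, K 2 y] ≠ 0 := by
  have vec3 : ∀ y : M, ![K 0 y, K 1 y, K 2 y] = fun i => K i y := by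
    intro y; funext i; fin_cases i <;> rfl
  constructor
  · rintro ⟨hν, hμ⟩ y ⟨g, rfl⟩
    set A := Adm g with hA
    set v : Fin 3 → E (g • x) := fun i => dact g x (K i x) with hv
    have hv' : ∀ i, v i = ∑ j, A j i • K j (g • x) := fun i => hK g x i
    have hKv : ∀ i, K i (g • x) = ∑ a, A i a • v a := by
      intro i
      have h1 : ∑ a, A i a • v a = ∑ j, (A * Aᵀ) i j • K j (g • x) := by
        simp_rw [hv', Finset.smul_sum, smul_smul]
        rw [Finset.sum_comm]
        refine Finset.sum_congr rfl fun j _ => ?_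
        rw [Matrix.mul_apply, Finset.sum_smul]
        simp [Matrix.transpose_apply]
      rw [h1, hAd]
      simp [Matrix.one_apply]
    have ωv : ∀ a b, ω (g • x) ![v a, v b] = 0 := fun a b =>
      (hω g x (K a x) (K b x)).trans (hμ a b)
    have ωv' : ∀ w : Fin 2 → Fin 3, (ω (g • x) fun s => v (w s)) = 0 := by
      intro w
      have h2 : (fun s => v (w s)) = ![v (w 0), v (w 1)] := by
        funext s; fin_cases s <;> rfl
      rw [h2]; exact ωv _ _
    have hμy : ∀ i j, ω (g • x) ![K i (g • x), K j (g • x)] = 0 := by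
      intro i j
      have h1 : ![K i (g • x), K j (g • x)]
          = fun s => ∑ a, A (![i, j] s) a • v a := by
        funext s; fin_cases s <;> simp [hKv]
      rw [h1, alt_expand]
      exact Finset.sum_eq_zero fun r _ => by rw [ωv', smul_zero]
    have hνy : Imψ (g • x) ![K 0 (g • x), K 1 (g • x), K 2 (g • x)] ≠ 0 := by
      intro h0
      rw [vec3] at h0
      have hall : ∀ r : Fin 3 → Fin 3,
          (Imψ (g • x) fun i => K (r i) (g • x)) = 0 := by
        intro r
        by_cases hr : Function.Injective r
        · have hb : Function.Bijective r := Finite.injective_iff_bijective.mp hr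
          have h3 : (fun i => K (r i) (g • x))
              = (fun i => K i (g • x)) ∘ (Equiv.ofBijective r hb) := rfl
          rw [h3, AlternatingMap.map_perm, h0, smul_zero]
        · rw [Function.Injective] at hr
          push_neg at hr
          obtain ⟨i, j, heq, hne⟩ := hr
          exact (Imψ (g • x)).map_eq_zero_of_eq _
            (show K (r i) (g • x) = K (r j) (g • x) by rw [heq]) hne
      have h4 : Imψ (g • x) ![v 0, v 1, v 2] = 0 := by
        have h5 : ![v 0, v 1, v 2]
            = fun i => ∑ j, (fun i j => A j i) i j • K j (g • x) := by
          funext i; fin_cases i <;> simp [hv']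
        rw [h5, alt_expand]
        exact Finset.sum_eq_zero fun r _ => by rw [hall, smul_zero]
      exact hν ((hImψ g x (K 0 x) (K 1 x) (K 2 x)).symm.trans h4)
    refine ⟨?_, hμy, hνy⟩
    by_contra hdep
    exact hνy (by rw [vec3]; exact (Imψ (g • x)).map_linearDependent _ hdep)
  · intro h
    obtain ⟨hli, hμ, hν⟩ := h x ⟨1, one_smul _ x⟩
    exact ⟨hν, hμ⟩
end

section
/- The O(2) subgroup of U(2) generated by S(U(1)×U(1)) and the matrix [[0,−1],[−1,0]] is exactly the preimage of the point ([[1:0]], 1) under the map U(2) → (ℂP¹ × S¹)/ℤ₂ sending A ↦ [([A·(1,0)ᵀ], det A)], where ℤ₂ acts by the antipodal map on both factors. Consequently, U(2)/O(2) for this O(2) is diffeomorphic to (S² × S¹)/ℤ₂. -/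
open Complex Matrix

noncomputable section

/-- `U(2)`. -/
abbrev U2 := Matrix.unitaryGroup (Fin 2) ℂ

/-- The generating set: `S(U(1)×U(1))` (diagonal special unitary matrices) together with the
matrix `[[0,−1],[−1,0]]`. -/
def Sgen : Set U2 :=
  {g | (g : Matrix (Fin 2) (Fin 2) ℂ) 0 1 = 0 ∧ (g : Matrix (Fin 2) (Fin 2) ℂ) 1 0 = 0 ∧
        (g : Matrix (Fin 2) (Fin 2) ℂ).det = 1} ∪
  {g | (g : Matrix (Fin 2) (Fin 2) ℂ) = !![0, -1; -1, 0]}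

/-- The `O(2)` subgroup of `U(2)` generated by `S(U(1)×U(1))` and `[[0,−1],[−1,0]]`. -/
def O2 : Subgroup U2 := Subgroup.closure Sgen

/-- The preimage of the point `([1:0], 1) ∈ (ℂP¹ × S¹)/ℤ₂` under
`A ↦ [([A(1,0)ᵀ], det A)]`: since `ℤ₂` acts antipodally on both factors, membership means
either `A(1,0)ᵀ ∥ (1,0)ᵀ` and `det A = 1`, or `A(1,0)ᵀ ∥ (0,1)ᵀ` (the antipode of `[1:0]`)
and `det A = −1`. -/
def PreSet : Set U2 :=
  {A | ((∃ c : ℂ, c ≠ 0 ∧ (A : Matrix (Fin 2) (Fin 2) ℂ).mulVec ![1, 0] = c • ![1, 0]) ∧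
          (A : Matrix (Fin 2) (Fin 2) ℂ).det = 1) ∨
       ((∃ c : ℂ, c ≠ 0 ∧ (A : Matrix (Fin 2) (Fin 2) ℂ).mulVec ![1, 0] = c • ![0, 1]) ∧
          (A : Matrix (Fin 2) (Fin 2) ℂ).det = -1)}

/-- The unit sphere `S² ⊂ ℝ³`. -/
def Sph : Type := {v : EuclideanSpace ℝ (Fin 3) // ‖v‖ = 1}

instance : TopologicalSpace Sph := by unfold Sph; infer_instance

/-- The antipodal relation on `S² × S¹` generating the `ℤ₂`-quotient. -/
def relA : Sph × Circle → Sph × Circle → Prop := fun a b =>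
  b.1.1 = -a.1.1 ∧
    (b.2 : ℂ) = -(a.2 : ℂ)


namespace Stmt15

lemma col_rel (A : U2) (i j : Fin 2) :
    (starRingEnd ℂ) (A.1 0 i) * A.1 0 j + (starRingEnd ℂ) (A.1 1 i) * A.1 1 j
      = if i = j then 1 else 0 := by
  have h : star (A : Matrix (Fin 2) (Fin 2) ℂ) * (A : Matrix (Fin 2) (Fin 2) ℂ) = 1 :=
    Unitary.star_mul_self_of_mem A.2
  have h2 := congrFun (congrFun h i) j
  simpa [Matrix.mul_apply, Fin.sum_univ_two, Matrix.star_apply, Matrix.one_apply,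
    Matrix.conjTranspose_apply, mul_comm] using h2

lemma row_rel (A : U2) (i j : Fin 2) :
    A.1 i 0 * (starRingEnd ℂ) (A.1 j 0) + A.1 i 1 * (starRingEnd ℂ) (A.1 j 1)
      = if i = j then 1 else 0 := by
  have h : (A : Matrix (Fin 2) (Fin 2) ℂ) * star (A : Matrix (Fin 2) (Fin 2) ℂ) = 1 :=
    Unitary.mul_star_self_of_mem A.2
  have h2 := congrFun (congrFun h i) j
  simpa [Matrix.mul_apply, Fin.sum_univ_two, Matrix.star_apply, Matrix.one_apply,
    Matrix.conjTranspose_apply] using h2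

lemma a00_ne (A : U2) (h : A.1 1 0 = 0) : A.1 0 0 ≠ 0 := by
  have := col_rel A 0 0
  simp [h] at this
  intro h0; rw [h0] at this; simp at this

lemma a01_eq (A : U2) (h : A.1 1 0 = 0) : A.1 0 1 = 0 := by
  have h1 := col_rel A 0 1
  simp [h] at h1
  rcases h1 with h1 | h1
  · exact absurd (by simpa using congrArg (starRingEnd ℂ) h1) (a00_ne A h)
  · exact h1

lemma a10_ne (A : U2) (h : A.1 0 0 = 0) : A.1 1 0 ≠ 0 := by
  have := col_rel A 0 0
  simp [h] at this
  intro h0; rw [h0] at this; simp at this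

lemma a11_eq (A : U2) (h : A.1 0 0 = 0) : A.1 1 1 = 0 := by
  have h1 := col_rel A 0 1
  simp [h] at h1
  rcases h1 with h1 | h1
  · exact absurd (by simpa using congrArg (starRingEnd ℂ) h1) (a10_ne A h)
  · exact h1

lemma mulVec10 (A : Matrix (Fin 2) (Fin 2) ℂ) (c : ℂ) :
    A.mulVec ![1, 0] = c • ![1, 0] ↔ A 0 0 = c ∧ A 1 0 = 0 := by
  constructor
  · intro h
    exact ⟨by simpa [Matrix.mulVec, dotProduct, Fin.sum_univ_two, Matrix.vecHead, Matrix.vecTail] using congrFun h 0,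
      by simpa [Matrix.mulVec, dotProduct, Fin.sum_univ_two, Matrix.vecHead, Matrix.vecTail] using congrFun h 1⟩
  · rintro ⟨h1, h2⟩
    funext i
    fin_cases i <;> simp [Matrix.mulVec, dotProduct, Fin.sum_univ_two, Matrix.vecHead, Matrix.vecTail, h1, h2]

lemma mulVec01 (A : Matrix (Fin 2) (Fin 2) ℂ) (c : ℂ) :
    A.mulVec ![1, 0] = c • ![0, 1] ↔ A 0 0 = 0 ∧ A 1 0 = c := by
  constructor
  · intro h
    exact ⟨by simpa [Matrix.mulVec, dotProduct, Fin.sum_univ_two, Matrix.vecHead, Matrix.vecTail] using congrFun h 0,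
      by simpa [Matrix.mulVec, dotProduct, Fin.sum_univ_two, Matrix.vecHead, Matrix.vecTail] using congrFun h 1⟩
  · rintro ⟨h1, h2⟩
    funext i
    fin_cases i <;> simp [Matrix.mulVec, dotProduct, Fin.sum_univ_two, Matrix.vecHead, Matrix.vecTail, h1, h2]

/-- characterization of PreSet -/
lemma mem_preSet (A : U2) :
    A ∈ PreSet ↔ (A.1 1 0 = 0 ∧ A.1.det = 1) ∨ (A.1 0 0 = 0 ∧ A.1.det = -1) := by
  constructor
  · rintro (⟨⟨c, hc, h⟩, hd⟩ | ⟨⟨c, hc, h⟩, hd⟩)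
    · exact Or.inl ⟨((mulVec10 _ _).1 h).2, hd⟩
    · exact Or.inr ⟨((mulVec01 _ _).1 h).1, hd⟩
  · rintro (⟨h0, hd⟩ | ⟨h0, hd⟩)
    · exact Or.inl ⟨⟨A.1 0 0, a00_ne A h0, (mulVec10 _ _).2 ⟨rfl, h0⟩⟩, hd⟩
    · exact Or.inr ⟨⟨A.1 1 0, a10_ne A h0, (mulVec01 _ _).2 ⟨h0, rfl⟩⟩, hd⟩

/-- PreSet as a subgroup -/
def H : Subgroup U2 where
  carrier := PreSet
  one_mem' := (mem_preSet 1).2 (Or.inl ⟨by simp, by simp⟩)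
  mul_mem' := by
    intro A B hA hB
    have hA := (mem_preSet A).1 hA
    have hB := (mem_preSet B).1 hB
    refine (mem_preSet (A*B)).2 ?_
    have hdm : ((A*B : U2) : Matrix (Fin 2) (Fin 2) ℂ).det = A.1.det * B.1.det := by
      rw [Matrix.UnitaryGroup.mul_val, Matrix.det_mul]
    have hm : ∀ i j, ((A*B : U2) : Matrix (Fin 2) (Fin 2) ℂ) i j
        = A.1 i 0 * B.1 0 j + A.1 i 1 * B.1 1 j := by
      intro i j
      rw [Matrix.UnitaryGroup.mul_val, Matrix.mul_apply, Fin.sum_univ_two]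
    rcases hA with ⟨hA0, hAd⟩ | ⟨hA0, hAd⟩ <;> rcases hB with ⟨hB0, hBd⟩ | ⟨hB0, hBd⟩
    · exact Or.inl ⟨by rw [hm, hA0, hB0]; ring, by rw [hdm, hAd, hBd]; ring⟩
    · exact Or.inr ⟨by rw [hm, hB0, a01_eq A hA0]; ring, by rw [hdm, hAd, hBd]; ring⟩
    · exact Or.inr ⟨by rw [hm, hA0, hB0]; ring, by rw [hdm, hAd, hBd]; ring⟩
    · exact Or.inl ⟨by rw [hm, hB0, a11_eq A hA0]; ring, by rw [hdm, hAd, hBd]; ring⟩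
  inv_mem' := by
    intro A hA
    have hA := (mem_preSet A).1 hA
    refine (mem_preSet A⁻¹).2 ?_
    have hinv : (A⁻¹ : U2).1 = star A.1 := rfl
    have hd : (A⁻¹ : U2).1.det = (starRingEnd ℂ) A.1.det := by
      rw [hinv, Matrix.star_eq_conjTranspose, Matrix.det_conjTranspose]; rfl
    rcases hA with ⟨hA0, hAd⟩ | ⟨hA0, hAd⟩
    · refine Or.inl ⟨?_, by rw [hd, hAd]; simp⟩
      rw [hinv, Matrix.star_eq_conjTranspose, Matrix.conjTranspose_apply, a01_eq A hA0]
      simp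
    · refine Or.inr ⟨?_, by rw [hd, hAd]; simp⟩
      rw [hinv, Matrix.star_eq_conjTranspose, Matrix.conjTranspose_apply, hA0]
      simp

lemma Jmem : !![(0:ℂ), -1; -1, 0] ∈ Matrix.unitaryGroup (Fin 2) ℂ := by
  rw [Matrix.mem_unitaryGroup_iff]
  ext i j
  fin_cases i <;> fin_cases j <;>
    simp [Matrix.mul_apply, Fin.sum_univ_two, Matrix.star_apply, Matrix.one_apply,
      Matrix.conjTranspose_apply]

def Jel : U2 := ⟨!![(0:ℂ), -1; -1, 0], Jmem⟩

lemma part1 : (O2 : Set U2) = PreSet := by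
  apply le_antisymm
  · have : O2 ≤ H := by
      rw [O2, Subgroup.closure_le]
      rintro g (⟨h1, h2, h3⟩ | hg)
      · exact (mem_preSet g).2 (Or.inl ⟨h2, h3⟩)
      · refine (mem_preSet g).2 (Or.inr ⟨by rw [hg]; rfl, ?_⟩)
        rw [hg, Matrix.det_fin_two_of]; ring
    exact this
  · intro A hA
    have hA := (mem_preSet A).1 hA
    rcases hA with ⟨hA0, hAd⟩ | ⟨hA0, hAd⟩
    · exact Subgroup.subset_closure (Or.inl ⟨a01_eq A hA0, hA0, hAd⟩)
    · have hJ : Jel ∈ O2 := Subgroup.subset_closure (Or.inr rfl)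
      have hDmem : Jel⁻¹ * A ∈ O2 := by
        apply Subgroup.subset_closure
        left
        have hm : ∀ i j, ((Jel⁻¹ * A : U2) : Matrix (Fin 2) (Fin 2) ℂ) i j
            = (star Jel.1) i 0 * A.1 0 j + (star Jel.1) i 1 * A.1 1 j := by
          intro i j
          rw [Matrix.UnitaryGroup.mul_val, Matrix.UnitaryGroup.inv_val, Matrix.mul_apply,
            Fin.sum_univ_two]
        have hsJ : star Jel.1 = !![(0:ℂ), -1; -1, 0] := by
          ext i j
          fin_cases i <;> fin_cases j <;>
            simp [Jel, Matrix.star_apply, Matrix.conjTranspose_apply]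
        have hdd : ((Jel⁻¹ * A : U2) : Matrix (Fin 2) (Fin 2) ℂ).det
            = (star Jel.1).det * A.1.det := by
          rw [Matrix.UnitaryGroup.mul_val, Matrix.UnitaryGroup.inv_val, Matrix.det_mul]
        refine ⟨?_, ?_, ?_⟩
        · rw [hm, hsJ, a11_eq A hA0]; norm_num
        · rw [hm, hsJ, hA0]; norm_num
        · rw [hdd, hsJ, hAd, Matrix.det_fin_two_of]; ring
      have : A = Jel * (Jel⁻¹ * A) := by group
      rw [this]
      exact mul_mem hJ hDmem



def hopf (z w : ℂ) : EuclideanSpace ℝ (Fin 3) :=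
  (WithLp.equiv 2 (Fin 3 → ℝ)).symm ![2 * (z * (starRingEnd ℂ) w).re, 2 * (z * (starRingEnd ℂ) w).im, normSq z - normSq w]

lemma hopf_apply (z w : ℂ) :
    hopf z w = fun i => ![2 * (z * (starRingEnd ℂ) w).re, 2 * (z * (starRingEnd ℂ) w).im, normSq z - normSq w] i := rfl

lemma hopf_norm {z w : ℂ} (h : normSq z + normSq w = 1) : ‖hopf z w‖ = 1 := by
  rw [EuclideanSpace.norm_eq]
  have key : (z * (starRingEnd ℂ) w).re ^ 2 + (z * (starRingEnd ℂ) w).im ^ 2 = normSq z * normSq w := by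
    have := Complex.normSq_mul z ((starRingEnd ℂ) w)
    rw [Complex.normSq_conj] at this
    rw [← this, Complex.normSq_apply]; ring
  have : (∑ i, ‖hopf z w i‖ ^ 2) = 1 := by
    rw [Fin.sum_univ_three]
    simp only [hopf_apply, Real.norm_eq_abs, _root_.sq_abs]
    simp only [Matrix.cons_val_zero, Matrix.cons_val_one, Matrix.head_cons,
      Matrix.cons_val_two, Matrix.tail_cons]
    nlinarith [key, h]
  rw [this, Real.sqrt_one]


lemma hopf_eq_iff {z w z' w' : ℂ} (h : hopf z' w' = hopf z w) :
    z' * (starRingEnd ℂ) w' = z * (starRingEnd ℂ) w ∧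
      normSq z' - normSq w' = normSq z - normSq w := by
  have h0 := congrFun (congrArg WithLp.ofLp h) 0
  have h1 := congrFun (congrArg WithLp.ofLp h) 1
  have h2 := congrFun (congrArg WithLp.ofLp h) 2
  simp only [hopf_apply, Matrix.cons_val_zero, Matrix.cons_val_one, Matrix.head_cons,
    Matrix.cons_val_two, Matrix.tail_cons] at h0 h1 h2
  exact ⟨Complex.ext (by linarith) (by linarith), h2⟩

lemma hopf_neg_iff {z w z' w' : ℂ} (h : hopf z' w' = -hopf z w) :
    z' * (starRingEnd ℂ) w' = -(z * (starRingEnd ℂ) w) ∧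
      normSq z' - normSq w' = -(normSq z - normSq w) := by
  have h0 := congrFun (congrArg WithLp.ofLp h) 0
  have h1 := congrFun (congrArg WithLp.ofLp h) 1
  have h2 := congrFun (congrArg WithLp.ofLp h) 2
  simp only [hopf_apply, Matrix.cons_val_zero, Matrix.cons_val_one, Matrix.head_cons,
    Matrix.cons_val_two, Matrix.tail_cons, PiLp.neg_apply, WithLp.ofLp_neg, Pi.neg_apply] at h0 h1 h2
  refine ⟨Complex.ext ?_ ?_, h2⟩ <;>
    simp only [Complex.neg_re, Complex.neg_im] <;> linarith

lemma hopf_fiber1 {z w z' w' : ℂ} (hn : normSq z + normSq w = 1)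
    (hn' : normSq z' + normSq w' = 1) (h : hopf z' w' = hopf z w) :
    ∃ l : ℂ, z' = l * z ∧ w' = l * w := by
  obtain ⟨h1, h2⟩ := hopf_eq_iff h
  have hz : normSq z' = normSq z := by linarith
  have hw : normSq w' = normSq w := by linarith
  by_cases hw0 : w = 0
  · have hw'0 : w' = 0 := by
      rw [← Complex.normSq_eq_zero, hw, hw0, Complex.normSq_zero]
    have hz1 : (starRingEnd ℂ) z * z = 1 := by
      rw [← Complex.normSq_eq_conj_mul_self]
      rw [hw0, Complex.normSq_zero] at hn; norm_cast; linarith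
    refine ⟨z' * (starRingEnd ℂ) z, ?_, by rw [hw0, hw'0]; ring⟩
    calc z' = z' * ((starRingEnd ℂ) z * z) := by rw [hz1]; ring
    _ = z' * (starRingEnd ℂ) z * z := by ring
  · have hw'0 : w' ≠ 0 := fun hh => hw0 (by
      rwa [← Complex.normSq_eq_zero, ← hw, Complex.normSq_eq_zero])
    refine ⟨w' / w, ?_, by field_simp⟩
    have e1 : z' * ((starRingEnd ℂ) w' * w') = z * (starRingEnd ℂ) w * w' := by
      linear_combination h1 * w'
    rw [← Complex.normSq_eq_conj_mul_self, hw, Complex.normSq_eq_conj_mul_self] at e1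
    have hcw : (starRingEnd ℂ) w ≠ 0 := by simpa using hw0
    have e2 : z' * w = z * w' := by
      apply mul_left_cancel₀ hcw
      linear_combination e1
    field_simp
    linear_combination e2

lemma hopf_fiber2 {z w z' w' : ℂ} (hn : normSq z + normSq w = 1)
    (hn' : normSq z' + normSq w' = 1) (h : hopf z' w' = -hopf z w) :
    ∃ l : ℂ, z' = -(l * (starRingEnd ℂ) w) ∧ w' = l * (starRingEnd ℂ) z := by
  obtain ⟨h1, h2⟩ := hopf_neg_iff h
  have hz : normSq z' = normSq w := by linarith
  have hw : normSq w' = normSq z := by linarith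
  by_cases hz0 : z = 0
  · have hw'0 : w' = 0 := by
      rw [← Complex.normSq_eq_zero, hw, hz0, Complex.normSq_zero]
    have hw1 : w * (starRingEnd ℂ) w = 1 := by
      rw [mul_comm, ← Complex.normSq_eq_conj_mul_self]
      rw [hz0, Complex.normSq_zero] at hn; norm_cast; linarith
    refine ⟨-(z' * w), ?_, by rw [hz0, hw'0]; simp⟩
    calc z' = z' * (w * (starRingEnd ℂ) w) := by rw [hw1]; ring
    _ = -(-(z' * w) * (starRingEnd ℂ) w) := by ring
  · have hcz : (starRingEnd ℂ) z ≠ 0 := by simpa using hz0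
    refine ⟨w' / (starRingEnd ℂ) z, ?_, by field_simp⟩
    have hnl : (starRingEnd ℂ) (w' / (starRingEnd ℂ) z) * (w' / (starRingEnd ℂ) z) = 1 := by
      rw [← Complex.normSq_eq_conj_mul_self]
      rw [Complex.normSq_div, Complex.normSq_conj, hw]
      norm_cast
      rw [div_self]
      simpa [Complex.normSq_eq_zero] using hz0
    have e1 : z' * (starRingEnd ℂ) (w' / (starRingEnd ℂ) z) * z = -(z * (starRingEnd ℂ) w) := by
      rw [map_div₀, Complex.conj_conj]
      have : z' * ((starRingEnd ℂ) w' / z) * z = z' * (starRingEnd ℂ) w' := by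
        field_simp
      rw [this, h1]
    have e2 : z' * (starRingEnd ℂ) (w' / (starRingEnd ℂ) z) = -(starRingEnd ℂ) w := by
      apply mul_right_cancel₀ hz0
      rw [e1]; ring
    calc z' = z' * ((starRingEnd ℂ) (w' / (starRingEnd ℂ) z) * (w' / (starRingEnd ℂ) z)) := by
          rw [hnl]; ring
    _ = (z' * (starRingEnd ℂ) (w' / (starRingEnd ℂ) z)) * (w' / (starRingEnd ℂ) z) := by ring
    _ = -(w' / (starRingEnd ℂ) z * (starRingEnd ℂ) w) := by rw [e2]; ring


lemma hopf_scale {z w l : ℂ} (hl : normSq l = 1) : hopf (z * l) (w * l) = hopf z w := by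
  have hll : l * (starRingEnd ℂ) l = 1 := by
    rw [Complex.mul_conj, hl]; norm_cast
  have h1 : z * l * (starRingEnd ℂ) (w * l) = z * (starRingEnd ℂ) w := by
    rw [_root_.map_mul]
    linear_combination (z * (starRingEnd ℂ) w) * hll
  have h2 : normSq (z * l) = normSq z := by rw [Complex.normSq_mul, hl, mul_one]
  have h3 : normSq (w * l) = normSq w := by rw [Complex.normSq_mul, hl, mul_one]
  unfold hopf
  rw [h1, h2, h3]

lemma colnorm (A : U2) : normSq (A.1 0 0) + normSq (A.1 1 0) = 1 := by
  have h := col_rel A 0 0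
  rw [if_pos rfl, ← Complex.normSq_eq_conj_mul_self, ← Complex.normSq_eq_conj_mul_self] at h
  exact_mod_cast h

lemma rownorm (A : U2) (i : Fin 2) : normSq (A.1 i 0) + normSq (A.1 i 1) = 1 := by
  have h := row_rel A i i
  rw [if_pos rfl, Complex.mul_conj, Complex.mul_conj] at h
  exact_mod_cast h

lemma det_conj_mul (A : U2) : (starRingEnd ℂ) A.1.det * A.1.det = 1 :=
  (Matrix.det_of_mem_unitary A.2).1

lemma det_normSq (A : U2) : normSq A.1.det = 1 := by
  have := det_conj_mul A
  rw [← Complex.normSq_eq_conj_mul_self] at this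
  exact_mod_cast this

lemma hopf_row_orth (a : U2) :
    hopf (a.1 0 1) (a.1 1 1) = -hopf (a.1 0 0) (a.1 1 0) := by
  have horth : a.1 0 1 * (starRingEnd ℂ) (a.1 1 1) = -(a.1 0 0 * (starRingEnd ℂ) (a.1 1 0)) := by
    have := row_rel a 0 1
    rw [if_neg (by decide)] at this
    linear_combination this
  have h0 := rownorm a 0
  have h1 := rownorm a 1
  have hneg : ∀ u : Fin 3 → ℝ,
      -((WithLp.equiv 2 (Fin 3 → ℝ)).symm u) = (WithLp.equiv 2 (Fin 3 → ℝ)).symm (-u) :=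
    fun u => rfl
  rw [hopf, hopf, hneg]
  apply congrArg
  funext i
  fin_cases i <;> simp [horth] <;> linarith

/-- The sphere part of the map. -/
def FS (A : U2) : Sph := ⟨hopf (A.1 0 0) (A.1 1 0), hopf_norm (colnorm A)⟩

lemma det_mem_sphere (A : U2) : A.1.det ∈ Metric.sphere (0:ℂ) 1 := by
  rw [mem_sphere_zero_iff_norm]
  have := det_normSq A
  have habs : ‖A.1.det‖ = 1 := by
    rw [← Complex.sq_norm] at this
    nlinarith [norm_nonneg A.1.det]
  exact habs

/-- The circle part of the map. -/
def FC (A : U2) : Circle := ⟨A.1.det, det_mem_sphere A⟩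

/-- The map `U(2) → S² × S¹`. -/
def F (A : U2) : Sph × Circle := (FS A, FC A)

lemma b_entries (a b : U2) (g : U2) (hb : b = a * g) (i j : Fin 2) :
    b.1 i j = a.1 i 0 * g.1 0 j + a.1 i 1 * g.1 1 j := by
  rw [hb, Matrix.UnitaryGroup.mul_val, Matrix.mul_apply, Fin.sum_univ_two]

lemma F_resp (a b : U2) (h : a⁻¹ * b ∈ O2) : Quot.mk relA (F a) = Quot.mk relA (F b) := by
  set g := a⁻¹ * b with hg
  have hb : b = a * g := by rw [hg]; group
  have hmem : g ∈ PreSet := by rw [← part1]; exact h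
  have hdet : b.1.det = a.1.det * g.1.det := by
    rw [hb, Matrix.UnitaryGroup.mul_val, Matrix.det_mul]
  rcases (mem_preSet g).1 hmem with ⟨hg0, hgd⟩ | ⟨hg0, hgd⟩
  · -- diagonal case
    have hl : normSq (g.1 0 0) = 1 := by
      have := colnorm g; rw [hg0, Complex.normSq_zero] at this; linarith
    have hb00 : b.1 0 0 = a.1 0 0 * g.1 0 0 := by
      rw [b_entries a b g hb, hg0, mul_zero, add_zero]
    have hb10 : b.1 1 0 = a.1 1 0 * g.1 0 0 := by
      rw [b_entries a b g hb, hg0, mul_zero, add_zero]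
    have : F b = F a := by
      refine Prod.ext (Subtype.ext ?_) (Subtype.ext ?_)
      · show hopf (b.1 0 0) (b.1 1 0) = hopf (a.1 0 0) (a.1 1 0)
        rw [hb00, hb10, hopf_scale hl]
      · show b.1.det = a.1.det
        rw [hdet, hgd, mul_one]
    rw [this]
  · -- antidiagonal case
    have hg11 : g.1 1 1 = 0 := a11_eq g hg0
    have hl : normSq (g.1 1 0) = 1 := by
      have := colnorm g; rw [hg0, Complex.normSq_zero] at this; linarith
    have hb00 : b.1 0 0 = a.1 0 1 * g.1 1 0 := by
      rw [b_entries a b g hb, hg0, mul_zero, zero_add]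
    have hb10 : b.1 1 0 = a.1 1 1 * g.1 1 0 := by
      rw [b_entries a b g hb, hg0, mul_zero, zero_add]
    apply Quot.sound
    constructor
    · show hopf (b.1 0 0) (b.1 1 0) = -hopf (a.1 0 0) (a.1 1 0)
      rw [hb00, hb10, hopf_scale hl, hopf_row_orth]
    · show b.1.det = -a.1.det
      rw [hdet, hgd]; ring

/-- The lifted map. -/
def Phi : U2 ⧸ O2 → Quot relA :=
  Quotient.lift (fun A => Quot.mk relA (F A))
    (fun a b hab => F_resp a b (QuotientGroup.leftRel_apply.1 hab))

lemma relA_cases {x y : Sph × Circle} (h : Quot.mk relA x = Quot.mk relA y) :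
    x = y ∨ relA x y := by
  have h' := Quot.eqvGen_exact h
  clear h
  induction h' with
  | rel a b hab => exact Or.inr hab
  | refl a => exact Or.inl rfl
  | symm a b hab ih =>
    rcases ih with rfl | ⟨h1, h2⟩
    · exact Or.inl rfl
    · exact Or.inr ⟨by rw [h1]; simp, by rw [h2]; simp⟩
  | trans a b c hab hbc ih1 ih2 =>
    rcases ih1 with rfl | ⟨h1, h2⟩
    · exact ih2
    · rcases ih2 with rfl | ⟨h3, h4⟩
      · exact Or.inr ⟨h1, h2⟩
      · refine Or.inl (Prod.ext (Subtype.ext ?_) (Subtype.ext ?_))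
        · rw [h3, h1]; simp
        · rw [h4, h2]; simp

lemma Phi_inj : Function.Injective Phi := by
  intro x y
  induction x using Quotient.inductionOn
  induction y using Quotient.inductionOn
  rename_i a b
  intro h
  have h' : Quot.mk relA (F a) = Quot.mk relA (F b) := h
  apply Quotient.sound
  apply QuotientGroup.leftRel_apply.2
  rw [← SetLike.mem_coe, part1]
  rw [show ((a⁻¹ * b) ∈ PreSet) = _ from propext (mem_preSet (a⁻¹ * b))]
  set d := a⁻¹ * b with hd
  have hde : ∀ i j, d.1 i j
      = (starRingEnd ℂ) (a.1 0 i) * b.1 0 j + (starRingEnd ℂ) (a.1 1 i) * b.1 1 j := by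
    intro i j
    rw [hd, Matrix.UnitaryGroup.mul_val, Matrix.UnitaryGroup.inv_val, Matrix.mul_apply,
      Fin.sum_univ_two, Matrix.star_eq_conjTranspose, Matrix.conjTranspose_apply,
      Matrix.conjTranspose_apply]
    rfl
  have hdd : d.1.det = (starRingEnd ℂ) a.1.det * b.1.det := by
    rw [hd, Matrix.UnitaryGroup.mul_val, Matrix.UnitaryGroup.inv_val, Matrix.det_mul,
      Matrix.star_eq_conjTranspose, Matrix.det_conjTranspose]
    rfl
  rcases relA_cases h' with heq | ⟨h1, h2⟩
  · -- F a = F b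
    have hS : hopf (b.1 0 0) (b.1 1 0) = hopf (a.1 0 0) (a.1 1 0) :=
      (congrArg (fun p : Sph × Circle => p.1.1) heq).symm
    have hC : b.1.det = a.1.det := (congrArg (fun p : Sph × Circle => (p.2 : ℂ)) heq).symm
    obtain ⟨l, hl1, hl2⟩ := hopf_fiber1 (colnorm a) (colnorm b) hS
    left
    constructor
    · rw [hde, hl1, hl2]
      have := col_rel a 1 0
      rw [if_neg (by decide)] at this
      linear_combination l * this
    · rw [hdd, hC, det_conj_mul]
  · -- antipodal
    have hS : hopf (b.1 0 0) (b.1 1 0) = -hopf (a.1 0 0) (a.1 1 0) := h1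
    have hC : b.1.det = -a.1.det := h2
    obtain ⟨l, hl1, hl2⟩ := hopf_fiber2 (colnorm a) (colnorm b) hS
    right
    constructor
    · rw [hde, hl1, hl2]; ring
    · rw [hdd, hC]
      linear_combination -(det_conj_mul a)

lemma hopf_surj (v : EuclideanSpace ℝ (Fin 3)) (hv : ‖v‖ = 1) :
    ∃ z w : ℂ, normSq z + normSq w = 1 ∧ hopf z w = v := by
  set x := v 0 with hx
  set y := v 1 with hy
  set t := v 2 with ht
  have hsum : x ^ 2 + y ^ 2 + t ^ 2 = 1 := by
    have := hv
    rw [EuclideanSpace.norm_eq, Fin.sum_univ_three] at this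
    have := congrArg (fun r => r ^ 2) this
    simp only [Real.sq_sqrt (by positivity : (0:ℝ) ≤ ‖v 0‖ ^ 2 + ‖v 1‖ ^ 2 + ‖v 2‖ ^ 2)] at this
    simpa [Real.norm_eq_abs, _root_.sq_abs] using this
  by_cases ht1 : t = -1
  case pos =>
    have hx0 : x = 0 := by nlinarith
    have hy0 : y = 0 := by nlinarith
    refine ⟨0, 1, by simp, ?_⟩
    ext i
    fin_cases i <;>
      simp [hopf_apply, ← hx, ← hy, ← ht, hx0, hy0, ht1]
  case neg =>
    have htlb : -1 ≤ t := by nlinarith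
    have htpos : 0 < 1 + t := by
      rcases lt_or_eq_of_le htlb with h | h
      · linarith
      · exact absurd h.symm ht1
    set r := Real.sqrt ((1 + t) / 2) with hr
    have hrpos : 0 < r := Real.sqrt_pos.2 (by linarith)
    have hr2 : r ^ 2 = (1 + t) / 2 := Real.sq_sqrt (by linarith)
    have hxy : x ^ 2 + y ^ 2 = 1 - t ^ 2 := by linarith
    refine ⟨(r : ℂ), ⟨x / (2 * r), -(y / (2 * r))⟩, ?_, ?_⟩
    · have : normSq (⟨x / (2 * r), -(y / (2 * r))⟩ : ℂ) = (1 - t) / 2 := by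
        rw [Complex.normSq_mk]
        field_simp
        nlinarith
      rw [this]
      have : normSq ((r : ℂ)) = (1 + t) / 2 := by
        rw [Complex.normSq_ofReal]; linarith [hr2]
      rw [this]; ring
    · have hre : ((r : ℂ) * (starRingEnd ℂ) ⟨x / (2 * r), -(y / (2 * r))⟩).re = x / 2 := by
        simp [Complex.mul_re, Complex.ofReal_re, Complex.ofReal_im]
        field_simp
      have him : ((r : ℂ) * (starRingEnd ℂ) ⟨x / (2 * r), -(y / (2 * r))⟩).im = y / 2 := by
        simp [Complex.mul_im, Complex.ofReal_re, Complex.ofReal_im]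
        field_simp
      have h3 : r * r - (x / (2 * r) * (x / (2 * r)) + y / (2 * r) * (y / (2 * r))) = t := by
        field_simp
        nlinarith
      ext i
      fin_cases i <;>
        simp [hopf_apply, hre, him, h3, ← hx, ← hy, ← ht] <;> linarith

lemma mk_unitary (z w s : ℂ) (hn : normSq z + normSq w = 1) (hs : normSq s = 1) :
    !![z, -((starRingEnd ℂ) w) * s; w, (starRingEnd ℂ) z * s] ∈ Matrix.unitaryGroup (Fin 2) ℂ := by
  have hzw : (starRingEnd ℂ) z * z + (starRingEnd ℂ) w * w = 1 := by
    rw [← Complex.normSq_eq_conj_mul_self, ← Complex.normSq_eq_conj_mul_self]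
    exact_mod_cast hn
  have hss : (starRingEnd ℂ) s * s = 1 := by
    rw [← Complex.normSq_eq_conj_mul_self]; exact_mod_cast hs
  rw [Matrix.mem_unitaryGroup_iff']
  ext i j
  fin_cases i <;> fin_cases j <;>
    [skip; skip; skip; skip] <;>
    simp only [Matrix.mul_apply, Fin.sum_univ_two, Matrix.star_apply,
      Matrix.conjTranspose_apply, Matrix.one_apply, _root_.map_mul, map_neg,
      Complex.conj_conj, Matrix.cons_val', Matrix.cons_val_zero, Matrix.cons_val_one,
      Matrix.head_cons, Matrix.head_fin_const, Matrix.empty_val', Matrix.cons_val_fin_one,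
      Matrix.of_apply]
  · simpa using hzw
  · simp
    ring
  · simp
    ring
  · simp
    linear_combination ((starRingEnd ℂ) w * w) * hss + ((starRingEnd ℂ) z * z) * hss + hzw

lemma Phi_surj : Function.Surjective Phi := by
  intro q
  induction q using Quot.inductionOn with
  | _ p =>
  obtain ⟨v, s⟩ := p
  obtain ⟨z, w, hn, hzw⟩ := hopf_surj v.1 v.2
  have hnC : (starRingEnd ℂ) z * z + (starRingEnd ℂ) w * w = 1 := by
    rw [← Complex.normSq_eq_conj_mul_self, ← Complex.normSq_eq_conj_mul_self]
    exact_mod_cast hn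
  set A : U2 := ⟨!![z, -((starRingEnd ℂ) w) * (s:ℂ); w, (starRingEnd ℂ) z * (s:ℂ)],
    mk_unitary z w (s:ℂ) hn (Circle.normSq_coe s)⟩ with hA
  refine ⟨QuotientGroup.mk A, ?_⟩
  show Quot.mk relA (F A) = Quot.mk relA (v, s)
  have e00 : A.1 0 0 = z := by rw [hA]; simp
  have e10 : A.1 1 0 = w := by rw [hA]; simp
  have edet : A.1.det = (s : ℂ) := by
    rw [hA]
    show Matrix.det !![z, -((starRingEnd ℂ) w) * (s:ℂ); w, (starRingEnd ℂ) z * (s:ℂ)] = (s:ℂ)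
    rw [Matrix.det_fin_two_of]
    linear_combination (s : ℂ) * hnC
  have h1 : FS A = v := by
    apply Subtype.ext
    show hopf (A.1 0 0) (A.1 1 0) = v.1
    rw [e00, e10, hzw]
  have h2 : FC A = s := by
    apply Subtype.ext
    show A.1.det = (s : ℂ)
    exact edet
  show Quot.mk relA (FS A, FC A) = Quot.mk relA (v, s)
  rw [h1, h2]

lemma cont_entry (i j : Fin 2) : Continuous fun A : U2 => A.1 i j :=
  (continuous_apply j).comp ((continuous_apply i).comp continuous_subtype_val)

lemma cont_prod : Continuous fun A : U2 => A.1 0 0 * (starRingEnd ℂ) (A.1 1 0) := by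
  have : Continuous fun A : U2 => A.1 0 0 * star (A.1 1 0) :=
    (cont_entry 0 0).mul (cont_entry 1 0).star
  exact this

lemma cont_normSq_entry (i j : Fin 2) : Continuous fun A : U2 => normSq (A.1 i j) :=
  Complex.continuous_normSq.comp (cont_entry i j)

lemma cont_hopf : Continuous fun A : U2 => hopf (A.1 0 0) (A.1 1 0) := by
  have h : Continuous fun A : U2 =>
      (fun i => ![2 * (A.1 0 0 * (starRingEnd ℂ) (A.1 1 0)).re,
        2 * (A.1 0 0 * (starRingEnd ℂ) (A.1 1 0)).im,
        normSq (A.1 0 0) - normSq (A.1 1 0)] i : Fin 3 → ℝ) := by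
    apply continuous_pi
    intro i
    fin_cases i
    · exact (continuous_const.mul (Complex.continuous_re.comp cont_prod))
    · exact (continuous_const.mul (Complex.continuous_im.comp cont_prod))
    · exact ((cont_normSq_entry 0 0).sub (cont_normSq_entry 1 0))
  exact (PiLp.continuous_toLp 2 _).comp h

lemma cont_F : Continuous F := by
  apply Continuous.prodMk
  · exact Continuous.subtype_mk cont_hopf _
  · exact Continuous.subtype_mk (Continuous.matrix_det continuous_subtype_val) _

lemma Phi_cont : Continuous Phi := by
  apply Continuous.quotient_lift
  exact (continuous_quot_mk).comp cont_F

instance : CompactSpace Sph := by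
  have h : IsCompact {v : EuclideanSpace ℝ (Fin 3) | ‖v‖ = 1} := by
    have he : {v : EuclideanSpace ℝ (Fin 3) | ‖v‖ = 1} = Metric.sphere 0 1 := by
      ext v
      simp [dist_zero_right]
    rw [he]
    exact isCompact_sphere 0 1
  exact isCompact_iff_compactSpace.mp h

instance : CompactSpace U2 := by
  have hS : IsCompact (Set.pi Set.univ fun _ : Fin 2 =>
      (Set.pi Set.univ fun _ : Fin 2 => Metric.closedBall (0:ℂ) 1)) :=
    isCompact_univ_pi fun _ => isCompact_univ_pi fun _ => isCompact_closedBall 0 1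
  have hclosed : IsClosed (Matrix.unitaryGroup (Fin 2) ℂ : Set (Matrix (Fin 2) (Fin 2) ℂ)) := by
    have he : (Matrix.unitaryGroup (Fin 2) ℂ : Set (Matrix (Fin 2) (Fin 2) ℂ))
        = (fun A : Matrix (Fin 2) (Fin 2) ℂ => A * star A) ⁻¹' {1} := by
      ext A
      simp [Matrix.mem_unitaryGroup_iff]
    rw [he]
    exact IsClosed.preimage
      (continuous_id.matrix_mul continuous_id.matrix_conjTranspose) isClosed_singleton
  have hsub : (Matrix.unitaryGroup (Fin 2) ℂ : Set (Matrix (Fin 2) (Fin 2) ℂ))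
      ⊆ Set.pi Set.univ fun _ : Fin 2 =>
        (Set.pi Set.univ fun _ : Fin 2 => Metric.closedBall (0:ℂ) 1) := by
    intro A hA
    intro i _
    intro j _
    rw [Metric.mem_closedBall, dist_zero_right]
    have hr := rownorm ⟨A, hA⟩ i
    have hle : normSq (A i j) ≤ 1 := by
      fin_cases j
      · simpa using (by nlinarith [Complex.normSq_nonneg (A i 1)] :
          normSq ((⟨A, hA⟩ : U2).1 i 0) ≤ 1)
      · simpa using (by nlinarith [Complex.normSq_nonneg (A i 0)] :
          normSq ((⟨A, hA⟩ : U2).1 i 1) ≤ 1)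
    rw [Complex.norm_def]
    exact Real.sqrt_le_one.2 hle
  exact isCompact_iff_compactSpace.mp (hS.of_isClosed_subset hclosed hsub)

/-- Invariant separating map for the quotient. -/
def Gmap : Sph × Circle → (Fin 3 → Fin 3 → ℝ) × ℂ × (Fin 3 → ℂ) := fun p =>
  (fun i j => p.1.1 i * p.1.1 j, ((p.2 : ℂ)) ^ 2, fun i => ((p.1.1 i : ℝ) : ℂ) * (p.2 : ℂ))

lemma cont_sph_coord (i : Fin 3) : Continuous fun p : Sph × Circle => p.1.1 i :=
  (PiLp.continuous_apply _ _ i).comp ((continuous_subtype_val).comp continuous_fst)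

lemma cont_circle_coe : Continuous fun p : Sph × Circle => (p.2 : ℂ) :=
  continuous_subtype_val.comp continuous_snd

lemma Gmap_cont : Continuous Gmap := by
  refine Continuous.prodMk ?_ (Continuous.prodMk ?_ ?_)
  · exact continuous_pi fun i => continuous_pi fun j =>
      (cont_sph_coord i).mul (cont_sph_coord j)
  · exact cont_circle_coe.pow 2
  · exact continuous_pi fun i =>
      (Complex.continuous_ofReal.comp (cont_sph_coord i)).mul cont_circle_coe

lemma Gmap_resp : ∀ a b : Sph × Circle, relA a b → Gmap a = Gmap b := by
  rintro a b ⟨h1, h2⟩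
  unfold Gmap
  refine Prod.ext ?_ (Prod.ext ?_ ?_)
  · funext i j
    simp only [h1, PiLp.neg_apply]
    ring
  · simp only [h2]
    ring
  · funext i
    simp only [h1, h2, PiLp.neg_apply]
    push_cast
    ring

lemma sph_exists_ne (v : Sph) : ∃ i, v.1 i ≠ 0 := by
  by_contra hall
  push_neg at hall
  have hz : v.1 = 0 := PiLp.ext fun i => by simpa using hall i
  have hnorm := v.2
  rw [hz, norm_zero] at hnorm
  exact one_ne_zero hnorm.symm

lemma Gmap_inj {p q : Sph × Circle} (h : Gmap p = Gmap q) : p = q ∨ relA p q := by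
  have h1 : ∀ i j, p.1.1 i * p.1.1 j = q.1.1 i * q.1.1 j := fun i j =>
    congrFun (congrFun (congrArg Prod.fst h) i) j
  have h2 : ((p.2 : ℂ)) ^ 2 = ((q.2 : ℂ)) ^ 2 := congrArg (fun r => r.2.1) h
  have h3 : ∀ i, ((p.1.1 i : ℝ) : ℂ) * (p.2 : ℂ) = ((q.1.1 i : ℝ) : ℂ) * (q.2 : ℂ) :=
    fun i => congrFun (congrArg (fun r => r.2.2) h) i
  obtain ⟨i0, hv0⟩ := sph_exists_ne p.1
  have hsq : (q.1.1 i0 - p.1.1 i0) * (q.1.1 i0 + p.1.1 i0) = 0 := by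
    linear_combination -(h1 i0 i0)
  rcases mul_eq_zero.1 hsq with hc | hc
  · -- q.1.1 i0 = p.1.1 i0
    have heq0 : q.1.1 i0 = p.1.1 i0 := by linarith [sub_eq_zero.1 hc]
    have hvj : ∀ j, q.1.1 j = p.1.1 j := by
      intro j
      apply mul_left_cancel₀ hv0
      rw [h1 i0 j, heq0]
    have hs : (q.2 : ℂ) = (p.2 : ℂ) := by
      have := h3 i0
      rw [heq0] at this
      exact (mul_left_cancel₀ (by exact_mod_cast hv0) this.symm)
    left
    exact Prod.ext (Subtype.ext (PiLp.ext fun j => (hvj j).symm)) (Subtype.ext hs.symm)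
  · -- q.1.1 i0 = -p.1.1 i0
    have heq0 : q.1.1 i0 = -p.1.1 i0 := by linarith
    have hvj : ∀ j, q.1.1 j = -p.1.1 j := by
      intro j
      apply mul_left_cancel₀ hv0
      have := h1 i0 j
      rw [heq0] at this
      linarith [this]
    have hs : (q.2 : ℂ) = -(p.2 : ℂ) := by
      have h30 := h3 i0
      rw [heq0] at h30
      push_cast at h30
      have hne : ((p.1.1 i0 : ℝ) : ℂ) ≠ 0 := by exact_mod_cast hv0
      exact mul_left_cancel₀ hne (by linear_combination h30)
    right
    refine ⟨?_, hs⟩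
    ext j
    rw [hvj j]
    simp

lemma relA_t2 : T2Space (Quot relA) := by
  have hresp := Gmap_resp
  let Gbar : Quot relA → (Fin 3 → Fin 3 → ℝ) × ℂ × (Fin 3 → ℂ) := Quot.lift Gmap hresp
  have hc : Continuous Gbar := continuous_quot_lift hresp Gmap_cont
  have hinj : Function.Injective Gbar := by
    intro x y
    induction x using Quot.inductionOn with
    | _ p =>
    induction y using Quot.inductionOn with
    | _ q =>
    intro h
    rcases Gmap_inj (show Gmap p = Gmap q from h) with rfl | hr
    · rfl
    · exact Quot.sound hr
  exact (hc.isClosedEmbedding hinj).toIsEmbedding.t2Space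

end Stmt15

/-- the subgroup of `U(2)` generated by `S(U(1)×U(1))` and `[[0,−1],[−1,0]]`
is exactly the preimage of `([1:0], 1)` under the map `U(2) → (ℂP¹ × S¹)/ℤ₂`,
`A ↦ [([A(1,0)ᵀ], det A)]`; consequently the coset space `U(2)/O(2)` is homeomorphic
(diffeomorphic) to `(S² × S¹)/ℤ₂`. -/
theorem stmt_15 :
    (O2 : Set U2) = PreSet ∧ Nonempty ((U2 ⧸ O2) ≃ₜ Quot relA) := by
  refine ⟨Stmt15.part1, ?_⟩
  haveI := Stmt15.relA_t2
  exact ⟨Continuous.homeoOfEquivCompactToT2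
    (f := Equiv.ofBijective Stmt15.Phi ⟨Stmt15.Phi_inj, Stmt15.Phi_surj⟩) Stmt15.Phi_cont⟩

end
end

section
/- Consider the system of equations in real variables r > 0, s ≥ 0: 5r⁴ − 4r²s² − 16r² − 3s⁴ + 3 = 0 and rs(r(√3 r − 9) + √3(s² − 8)) = 0 and rs(r(√3 r + 9) + √3(s² − 8)) = 0 (these are μ₁ = μ₂ = μ₃ = 0 for the K₃-action, after clearing the positive factors |Z|⁻⁴ and trig factors, on the slice Z₀=1, Z₂ = r, Z₃ = 0, |Z₁| = s). Extending to r ≥ 0, the complete solution set is {(r,s)} = {(0,1), (√3, 0), (1/√5, 0)}. -/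
/-- for `r ≥ 0`, `s ≥ 0`, the system
`5r⁴ − 4r²s² − 16r² − 3s⁴ + 3 = 0`,
`rs(r(√3 r − 9) + √3(s² − 8)) = 0`,
`rs(r(√3 r + 9) + √3(s² − 8)) = 0`
has precisely the solutions `(r,s) ∈ {(0,1), (√3,0), (1/√5,0)}`. -/
theorem stmt_17 (r s : ℝ) (hr : 0 ≤ r) (hs : 0 ≤ s) :
    (5 * r ^ 4 - 4 * r ^ 2 * s ^ 2 - 16 * r ^ 2 - 3 * s ^ 4 + 3 = 0 ∧
      r * s * (r * (Real.sqrt 3 * r - 9) + Real.sqrt 3 * (s ^ 2 - 8)) = 0 ∧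
      r * s * (r * (Real.sqrt 3 * r + 9) + Real.sqrt 3 * (s ^ 2 - 8)) = 0) ↔
    ((r = 0 ∧ s = 1) ∨ (r = Real.sqrt 3 ∧ s = 0) ∨ (r = 1 / Real.sqrt 5 ∧ s = 0)) := by
  have h3 : Real.sqrt 3 ^ 2 = 3 := Real.sq_sqrt (by norm_num)
  have h5 : Real.sqrt 5 ^ 2 = 5 := Real.sq_sqrt (by norm_num)
  have h5pos : (0:ℝ) < Real.sqrt 5 := Real.sqrt_pos.mpr (by norm_num)
  constructor
  · rintro ⟨h1, h2, h4⟩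
    have key : r ^ 2 * s = 0 := by
      have h18 : (-18 : ℝ) * (r ^ 2 * s) = 0 := by linear_combination h2 - h4
      linarith
    have key2 : r = 0 ∨ s = 0 := by
      rcases mul_eq_zero.mp key with h | h
      · exact Or.inl (pow_eq_zero_iff (by norm_num) |>.mp h)
      · exact Or.inr h
    rcases key2 with hr0 | hs0
    · left
      refine ⟨hr0, ?_⟩
      subst hr0
      have hfac : (s - 1) * ((s + 1) * (s ^ 2 + 1)) = 0 := by nlinarith
      rcases mul_eq_zero.mp hfac with h | h
      · linarith
      · nlinarith [sq_nonneg s]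
    · subst hs0
      have hfac : (r ^ 2 - 3) * (5 * r ^ 2 - 1) = 0 := by nlinarith
      rcases mul_eq_zero.mp hfac with h | h
      · right; left
        refine ⟨?_, rfl⟩
        rw [← Real.sqrt_sq hr]
        congr 1
        linarith
      · right; right
        refine ⟨?_, rfl⟩
        rw [← Real.sqrt_sq hr]
        rw [one_div, ← Real.sqrt_inv]
        congr 1
        linarith
  · rintro (⟨h1, h2⟩ | ⟨h1, h2⟩ | ⟨h1, h2⟩) <;> subst h1 <;> subst h2
    · norm_num
    · refine ⟨by nlinarith, by ring, by ring⟩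
    · refine ⟨?_, by ring, by ring⟩
      field_simp
      nlinarith [h5]
end

section
/- Under the adjoint action of the standard SO(3) ⊂ SU(3) on 𝔰𝔲(3) ≅ Λ²(ℝ³) ⊕ i·S²₀(ℝ³) (skew-symmetric real part plus i times traceless symmetric real part), every element whose stabiliser in SO(3) is at least one-dimensional is SO(3)-conjugate to an element of the form [[iμ, −λ, 0],[λ, iμ, 0],[0, 0, −2iμ]] for some λ, μ ∈ ℝ. -/
open Complex Matrix

lemma ch3 (k : Matrix (Fin 3) (Fin 3) ℝ) :
    k*k*k - k.trace • (k*k) + (((k.trace)^2 - (k*k).trace)/2) • k - k.det • (1:Matrix (Fin 3) (Fin 3) ℝ) = 0 := by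
  ext i j
  fin_cases i <;> fin_cases j <;>
    simp [Matrix.mul_apply, Fin.sum_univ_succ, Matrix.det_fin_three, Matrix.trace,
      Matrix.diag, Matrix.one_apply] <;> ring

lemma trace_invol (k : Matrix (Fin 3) (Fin 3) ℝ) (h2 : k * k = 1) (hdet : k.det = 1)
    (hne : k ≠ 1) : k.trace = -1 := by
  by_contra ht
  set t := k.trace with htdef
  have hch := ch3 k
  rw [h2, hdet] at hch
  have hkkk : (1:Matrix (Fin 3) (Fin 3) ℝ) * k = k := one_mul k
  rw [hkkk] at hch
  have key : ∀ i j, (t^2 - 1) * k i j = (2 + 2*t) * (1 : Matrix (Fin 3) (Fin 3) ℝ) i j := by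
    intro i j
    have h := congr_fun (congr_fun hch i) j
    simp only [Matrix.sub_apply, Matrix.add_apply, Matrix.smul_apply, smul_eq_mul,
      Matrix.zero_apply, Matrix.trace_one, Fintype.card_fin, ← htdef] at h
    push_cast at h
    nlinarith [h]
  have ht1 : t ≠ 1 := by
    intro h1
    have hd := key 0 0
    rw [h1] at hd; norm_num at hd
  have hm1 : t - 1 ≠ 0 := fun hc => ht1 (by linarith)
  have hp1 : t + 1 ≠ 0 := fun hc => ht (by linarith)
  have hs : ∀ i j, k i j = if i = j then 2/(t-1) else 0 := by
    intro i j
    have h := key i j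
    by_cases hij : i = j
    · rw [hij] at h ⊢
      simp only [Matrix.one_apply_eq, mul_one] at h
      rw [if_pos rfl, eq_div_iff hm1]
      have hz : (t+1) * (k j j * (t-1) - 2) = 0 := by linear_combination h
      rcases mul_eq_zero.mp hz with h' | h'
      · exact absurd (by linarith) ht
      · linarith
    · simp only [Matrix.one_apply_ne hij, mul_zero] at h
      rw [if_neg hij]
      have ht2 : t^2 - 1 ≠ 0 := fun hc => hm1 (by
        have : (t-1)*(t+1) = 0 := by linear_combination hc
        rcases mul_eq_zero.mp this with h' | h'
        · exact h'
        · exact absurd h' hp1)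
      exact (mul_eq_zero.mp h).resolve_left ht2
  set s : ℝ := 2/(t-1) with hsdef
  have hk : k = s • (1 : Matrix (Fin 3) (Fin 3) ℝ) := by
    ext i j
    rw [hs i j]
    by_cases hij : i = j <;> simp [hij, Matrix.one_apply]
  have hs2 : s * s = 1 := by
    have h00 := congr_fun (congr_fun h2 0) 0
    rw [hk] at h00
    simpa [Matrix.mul_apply, Fin.sum_univ_three, Matrix.one_apply] using h00
  have hdet' : s^3 = 1 := by
    have hd := hdet
    rw [hk] at hd
    simpa [Matrix.det_fin_three, Matrix.one_apply] using hd
  have hs1 : s = 1 := by nlinarith [hs2, hdet']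
  apply hne
  rw [hk, hs1, one_smul]


lemma not_all_symm (S : Set (Matrix (Fin 3) (Fin 3) ℝ))
    (hS : S.Infinite)
    (horth : ∀ g ∈ S, g * gᵀ = 1)
    (hdet : ∀ g ∈ S, g.det = 1)
    (hmul : ∀ g ∈ S, ∀ h ∈ S, g * h ∈ S)
    (hsym : ∀ g ∈ S, gᵀ = g) : False := by
  obtain ⟨t, hts, htc⟩ := hS.exists_subset_card_eq 10
  have hsq : ∀ g ∈ S, g * g = 1 := fun g hg => by
    have := horth g hg; rwa [hsym g hg] at this
  have htr : ∀ X ∈ S, ∀ Y ∈ S, X ≠ Y → (X * Y).trace = -1 := by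
    intro X hX Y hY hXY
    have hXYS := hmul X hX Y hY
    have hcomm : Y * X = X * Y := by
      have h1 := hsym _ hXYS
      rw [Matrix.transpose_mul, hsym X hX, hsym Y hY] at h1
      exact h1
    apply trace_invol
    · calc X * Y * (X * Y) = X * (Y * X) * Y := by noncomm_ring
        _ = X * (X * Y) * Y := by rw [hcomm]
        _ = (X * X) * (Y * Y) := by noncomm_ring
        _ = 1 := by rw [hsq X hX, hsq Y hY, one_mul]
    · rw [Matrix.det_mul, hdet X hX, hdet Y hY, one_mul]
    · intro hone
      apply hXY
      have : X * (X * Y) = X * 1 := by rw [hone]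
      rw [← mul_assoc, hsq X hX, one_mul, mul_one] at this
      exact this.symm
  have hindep : LinearIndependent ℝ (fun x : {x // x ∈ t} => (x : Matrix (Fin 3) (Fin 3) ℝ)) := by
    rw [Fintype.linearIndependent_iff]
    intro c hc
    set s : ℝ := ∑ i, c i with hsdef
    have h4 : ∀ j : {x // x ∈ t}, 4 * c j = s := by
      intro j
      have h0 : ((∑ i, c i • ((i : Matrix (Fin 3) (Fin 3) ℝ))) * (j : Matrix (Fin 3) (Fin 3) ℝ)).trace = 0 := by
        rw [hc, zero_mul, Matrix.trace_zero]
      rw [Finset.sum_mul] at h0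
      simp only [smul_mul_assoc] at h0
      rw [Matrix.trace_sum] at h0
      simp only [Matrix.trace_smul, smul_eq_mul] at h0
      have hterm : ∀ i : {x // x ∈ t},
          ((i : Matrix (Fin 3) (Fin 3) ℝ) * (j : Matrix (Fin 3) (Fin 3) ℝ)).trace
            = if i = j then 3 else -1 := by
        intro i
        by_cases hij : i = j
        · rw [if_pos hij, hij, hsq _ (hts j.2), Matrix.trace_one]
          norm_num
        · rw [if_neg hij]
          exact htr _ (hts i.2) _ (hts j.2) (fun h => hij (Subtype.ext h))
      rw [Finset.sum_congr rfl (fun i _ => by rw [hterm i])] at h0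
      have hsplit : ∀ i : {x // x ∈ t},
          c i * (if i = j then 3 else -1) = (if i = j then 4 * c i else 0) - c i := by
        intro i; by_cases hij : i = j <;> simp [hij] <;> ring
      rw [Finset.sum_congr rfl (fun i _ => hsplit i), Finset.sum_sub_distrib,
        Finset.sum_ite_eq' Finset.univ j (fun i => 4 * c i)] at h0
      simp only [Finset.mem_univ, if_true] at h0
      rw [← hsdef] at h0
      linarith
    have hsum : 4 * s = 10 * s := by
      have := Finset.sum_congr rfl (fun j (_ : j ∈ (Finset.univ : Finset {x // x ∈ t})) => h4 j)
      rw [← Finset.mul_sum, ← hsdef, Finset.sum_const, Finset.card_univ, Fintype.card_coe, htc] at this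
      rw [this]; push_cast; ring
    have hs0 : s = 0 := by linarith
    intro i
    have := h4 i
    rw [hs0] at this
    linarith
  have hcard := hindep.fintype_card_le_finrank
  rw [Fintype.card_coe, htc] at hcard
  have : Module.finrank ℝ (Matrix (Fin 3) (Fin 3) ℝ) = 9 := by
    rw [Module.finrank_matrix]; simp
  omega


-- helper: rows orthonormal gives orthogonal matrix
lemma rows_orth (f : Fin 3 → Fin 3 → ℝ)
    (h : ∀ i j, (∑ k, f i k * f j k) = if i = j then 1 else 0) :
    (Matrix.of f) * (Matrix.of f)ᵀ = 1 := by
  ext i j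
  simp only [Matrix.mul_apply, Matrix.transpose_apply, Matrix.of_apply, Matrix.one_apply]
  exact h i j

lemma mapC_mul (X Y : Matrix (Fin 3) (Fin 3) ℝ) :
    (X*Y).map Complex.ofReal = X.map Complex.ofReal * Y.map Complex.ofReal := by
  ext i j
  simp only [Matrix.map_apply, Matrix.mul_apply, Fin.sum_univ_three]
  push_cast
  ring

lemma mapC_one : (1 : Matrix (Fin 3) (Fin 3) ℝ).map Complex.ofReal = 1 := by
  ext i j
  by_cases h : i = j <;> simp [Matrix.map_apply, Matrix.one_apply, h]

set_option maxHeartbeats 1000000 in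
theorem main (A : Matrix (Fin 3) (Fin 3) ℂ)
    (hskew : Aᴴ = -A) (htr : A.trace = 0)
    (g : Matrix (Fin 3) (Fin 3) ℝ)
    (hgo : g * gᵀ = 1) (hgd : g.det = 1)
    (hgA : g.map Complex.ofReal * A = A * g.map Complex.ofReal)
    (hgns : gᵀ ≠ g) :
    ∃ (p : Matrix (Fin 3) (Fin 3) ℝ) (l m : ℝ), p * pᵀ = 1 ∧ p.det = 1 ∧
      p.map Complex.ofReal * A * (p.map Complex.ofReal)ᵀ =
        !![I * m, -l, 0; l, I * m, 0; 0, 0, -2 * I * m] := by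
  have hgo' : gᵀ * g = 1 := mul_eq_one_comm.mp hgo
  -- eigenvector of g with eigenvalue 1
  have hdet0 : (g - 1).det = 0 := by
    have h1 : g * (gᵀ - 1) = -(g - 1) := by
      rw [Matrix.mul_sub, hgo, mul_one, neg_sub]
    have h2 : g.det * (gᵀ - 1).det = (-(g-1)).det := by rw [← Matrix.det_mul, h1]
    have h3 : (gᵀ - 1).det = (g - 1).det := by
      rw [show gᵀ - 1 = (g - 1)ᵀ by rw [Matrix.transpose_sub, Matrix.transpose_one],
        Matrix.det_transpose]
    rw [hgd, one_mul, h3] at h2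
    have h4 : (-(g-1) : Matrix (Fin 3) (Fin 3) ℝ).det = (-1)^3 * (g-1).det := by
      rw [show (-(g-1) : Matrix (Fin 3) (Fin 3) ℝ) = (-1 : ℝ) • (g-1) by simp,
        Matrix.det_smul]
      norm_num
    rw [h4] at h2
    norm_num at h2
    linarith
  obtain ⟨u, hu0, huv⟩ := Matrix.exists_mulVec_eq_zero_iff.mpr hdet0
  have hgu : g *ᵥ u = u := by
    have := huv
    rw [Matrix.sub_mulVec, Matrix.one_mulVec, sub_eq_zero] at this
    exact this
  -- normalized eigenvector in EuclideanSpace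
  set w : EuclideanSpace ℝ (Fin 3) := (WithLp.equiv 2 (Fin 3 → ℝ)).symm u with hwdef
  have hw0 : w ≠ 0 := by
    intro h
    exact hu0 ((WithLp.equiv 2 (Fin 3 → ℝ)).symm.injective (h.trans (by simp)))
  have hnw : ‖w‖ ≠ 0 := norm_ne_zero_iff.mpr hw0
  set uf : Fin 3 → ℝ := ‖w‖⁻¹ • u with hufdef
  set uE : EuclideanSpace ℝ (Fin 3) := (WithLp.equiv 2 (Fin 3 → ℝ)).symm uf with huEdef
  have huE : uE = ‖w‖⁻¹ • w := by
    rw [huEdef, hufdef]; exact WithLp.toLp_smul ..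
  have huEnorm : ‖uE‖ = 1 := by
    rw [huE, norm_smul]
    simp [_root_.abs_of_nonneg (inv_nonneg.mpr (norm_nonneg w)), inv_mul_cancel₀ hnw]
  have hguf : g *ᵥ uf = uf := by
    rw [hufdef, Matrix.mulVec_smul, hgu]
  -- orthonormal basis extension
  have hON : Orthonormal ℝ (Set.restrict {(2:Fin 3)} (fun _ => uE)) := by
    constructor
    · intro i; exact huEnorm
    · intro i j hij
      exact absurd (Subtype.ext (i.2.trans j.2.symm)) hij
  obtain ⟨b, hb2⟩ := hON.exists_orthonormalBasis_extension_of_card_eq (by simp)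
  have hb2' : b 2 = uE := hb2 2 rfl
  have horthb : ∀ i j, (∑ k, b i k * b j k) = if i = j then 1 else 0 := by
    intro i j
    have := (orthonormal_iff_ite.mp b.orthonormal) i j
    rw [PiLp.inner_apply] at this
    simpa [RCLike.inner_apply, mul_comm] using this
  -- build the orthogonal matrix P with rows from b, last row uE, det 1
  set d : ℝ := (Matrix.of (fun i j => b i j)).det with hddef
  set ε : Fin 3 → ℝ := fun i => if i = 0 then d else 1 with hεdef
  set P : Matrix (Fin 3) (Fin 3) ℝ := Matrix.of (fun i j => ε i * b i j) with hPdef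
  have hP0 : (Matrix.of fun i j => b i j) * (Matrix.of fun i j => b i j)ᵀ = 1 :=
    rows_orth _ horthb
  have hd2 : d * d = 1 := by
    have h := congrArg Matrix.det hP0
    rw [Matrix.det_mul, Matrix.det_transpose, Matrix.det_one] at h
    rw [hddef]
    exact h
  have hε2 : ∀ i, ε i * ε i = 1 := by
    intro i
    rw [hεdef]
    dsimp only
    split
    · exact hd2
    · norm_num
  have hε22 : ε 2 = 1 := by rw [hεdef]; norm_num; exact fun h => absurd h (by decide)
  have hPPt : P * Pᵀ = 1 := by
    apply rows_orth
    intro i j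
    have h1 : (∑ k, (ε i * b i k) * (ε j * b j k)) = ε i * ε j * ∑ k, b i k * b j k := by
      rw [Finset.mul_sum]
      apply Finset.sum_congr rfl
      intros
      ring
    rw [h1, horthb]
    by_cases hij : i = j
    · subst hij
      simp [hε2 i]
    · simp [hij]
  have hPtP : Pᵀ * P = 1 := mul_eq_one_comm.mp hPPt
  have hPdet : P.det = 1 := by
    have hP : P = Matrix.diagonal ε * Matrix.of (fun i j => b i j) := by
      ext i j
      rw [hPdef]
      simp [Matrix.diagonal_mul]
    rw [hP, Matrix.det_mul, Matrix.det_diagonal, ← hddef]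
    rw [Fin.prod_univ_three, hεdef]
    norm_num
    exact hd2
  have hP2 : ∀ k, P 2 k = uf k := by
    intro k
    rw [hPdef]
    show ε 2 * b 2 k = uf k
    rw [hε22, one_mul, hb2']
    rfl
  -- vecMul facts
  have hgTuf : gᵀ *ᵥ uf = uf := by
    calc gᵀ *ᵥ uf = gᵀ *ᵥ (g *ᵥ uf) := by rw [hguf]
      _ = (gᵀ * g) *ᵥ uf := by rw [Matrix.mulVec_mulVec]
      _ = uf := by rw [hgo', Matrix.one_mulVec]
  have hvg : ∀ l, (∑ k, uf k * g k l) = uf l := by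
    intro l
    have h1 : uf ᵥ* g = uf := by
      rw [show g = (gᵀ)ᵀ by rw [Matrix.transpose_transpose], Matrix.vecMul_transpose, hgTuf]
    have := congr_fun h1 l
    simpa [Matrix.vecMul, dotProduct] using this
  have hvgT : ∀ l, (∑ k, uf k * gᵀ k l) = uf l := by
    intro l
    have h1 : uf ᵥ* gᵀ = uf := by rw [Matrix.vecMul_transpose, hguf]
    have := congr_fun h1 l
    simpa [Matrix.vecMul, dotProduct] using this
  -- generic row-2 computation
  have hrowgen : ∀ (h : Matrix (Fin 3) (Fin 3) ℝ), (∀ l, (∑ k, uf k * h k l) = uf l) →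
      ∀ j, (P * h * Pᵀ) 2 j = if j = 2 then 1 else 0 := by
    intro h hh j
    have e1 : (P * h * Pᵀ) 2 j = ∑ l, (∑ k, P 2 k * h k l) * P j l := by
      simp only [Matrix.mul_apply, Matrix.transpose_apply]
    have e2 : ∀ l, (∑ k, P 2 k * h k l) = uf l := by
      intro l
      rw [Finset.sum_congr rfl (fun k _ => by rw [hP2 k])]
      exact hh l
    rw [e1, Finset.sum_congr rfl (fun l _ => by rw [e2 l])]
    have e3 : (∑ l, uf l * P j l) = ε j * ∑ l, b 2 l * b j l := by
      rw [Finset.mul_sum]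
      apply Finset.sum_congr rfl
      intro l _
      have : uf l = b 2 l := by rw [hb2']; rfl
      rw [this, hPdef]
      show b 2 l * (ε j * b j l) = ε j * (b 2 l * b j l)
      ring
    rw [e3, horthb]
    by_cases hj : j = 2
    · subst hj
      simp [hε22]
    · simp [hj, Ne.symm hj]
  set R : Matrix (Fin 3) (Fin 3) ℝ := P * g * Pᵀ with hRdef
  have hRT : Rᵀ = P * gᵀ * Pᵀ := by
    rw [hRdef, Matrix.transpose_mul, Matrix.transpose_mul, Matrix.transpose_transpose,
      ← mul_assoc]
  have hrow : ∀ j, R 2 j = if j = 2 then 1 else 0 := hrowgen g hvg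
  have hcol : ∀ i, R i 2 = if i = 2 then 1 else 0 := by
    intro i
    have := hrowgen gᵀ hvgT i
    rw [← hRT] at this
    rw [show R i 2 = Rᵀ 2 i from rfl, this]
  have hR02 : R 0 2 = 0 := by rw [hcol 0]; norm_num; exact fun h => absurd h (by decide)
  have hR12 : R 1 2 = 0 := by rw [hcol 1]; norm_num; exact fun h => absurd h (by decide)
  have hR20 : R 2 0 = 0 := by rw [hrow 0]; norm_num; exact fun h => absurd h (by decide)
  have hR21 : R 2 1 = 0 := by rw [hrow 1]; norm_num; exact fun h => absurd h (by decide)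
  have hR22 : R 2 2 = 1 := by rw [hrow 2]; norm_num
  have hRo : R * Rᵀ = 1 := by
    rw [hRT, hRdef]
    calc P * g * Pᵀ * (P * gᵀ * Pᵀ) = P * g * (Pᵀ * P) * gᵀ * Pᵀ := by noncomm_ring
      _ = P * (g * gᵀ) * Pᵀ := by rw [hPtP, mul_one]; noncomm_ring
      _ = 1 := by rw [hgo, mul_one, hPPt]
  have hRdet : R.det = 1 := by
    rw [hRdef, Matrix.det_mul, Matrix.det_mul, Matrix.det_transpose, hPdet, hgd]
    norm_num
  have hRns : Rᵀ ≠ R := by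
    intro hsymR
    apply hgns
    rw [hRT, hRdef] at hsymR
    have h1 : Pᵀ * (P * gᵀ * Pᵀ) * P = Pᵀ * (P * g * Pᵀ) * P := by rw [hsymR]
    have h2 : ∀ X : Matrix (Fin 3) (Fin 3) ℝ, Pᵀ * (P * X * Pᵀ) * P = X := by
      intro X
      calc Pᵀ * (P * X * Pᵀ) * P = (Pᵀ * P) * X * (Pᵀ * P) := by noncomm_ring
        _ = X := by rw [hPtP, one_mul, mul_one]
    rw [h2, h2] at h1
    exact h1
  -- structural equations for the rotation block
  have h00 : R 0 0 * R 0 0 + R 0 1 * R 0 1 = 1 := by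
    have := congr_fun (congr_fun hRo 0) 0
    simp only [Matrix.mul_apply, Matrix.transpose_apply, Fin.sum_univ_three,
      Matrix.one_apply_eq, hR02] at this
    linarith
  have h01 : R 0 0 * R 1 0 + R 0 1 * R 1 1 = 0 := by
    have := congr_fun (congr_fun hRo 0) 1
    simp only [Matrix.mul_apply, Matrix.transpose_apply, Fin.sum_univ_three, hR02, hR12] at this
    rw [Matrix.one_apply_ne (by decide)] at this
    linarith
  have hdet3 : R 0 0 * R 1 1 - R 0 1 * R 1 0 = 1 := by
    rw [Matrix.det_fin_three, hR02, hR12, hR20, hR21, hR22] at hRdet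
    linarith [hRdet]
  have hf : R 1 1 = R 0 0 := by
    linear_combination R 0 0 * hdet3 + R 0 1 * h01 - R 1 1 * h00
  have he : R 1 0 = -(R 0 1) := by
    linear_combination (-(R 0 1)) * hdet3 + R 0 0 * h01 - R 1 0 * h00
  have hd0 : R 0 1 ≠ 0 := by
    intro hz
    apply hRns
    ext i j
    fin_cases i <;> fin_cases j <;>
      simp [Matrix.transpose_apply, hR02, hR12, hR20, hR21, hf, he, hz]
  -- complex part
  have hc1 : R 0 0 ≠ 1 := by
    intro h
    apply hd0
    have : R 0 1 * R 0 1 = 0 := by linear_combination h00 - (R 0 0 + 1) * h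
    exact mul_self_eq_zero.mp this
  set Q : Matrix (Fin 3) (Fin 3) ℂ := P.map Complex.ofReal with hQdef
  have hQt : Pᵀ.map Complex.ofReal = Qᵀ := by rw [Matrix.transpose_map, hQdef]
  have hQtQ : Qᵀ * Q = 1 := by
    have := congrArg (fun X : Matrix (Fin 3) (Fin 3) ℝ => X.map Complex.ofReal) hPtP
    rw [mapC_mul, mapC_one, hQt, hQdef] at this
    exact this
  have hQQt : Q * Qᵀ = 1 := mul_eq_one_comm.mp hQtQ
  set Ac : Matrix (Fin 3) (Fin 3) ℂ := Q * A * Qᵀ with hAcdef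
  set Rc : Matrix (Fin 3) (Fin 3) ℂ := R.map Complex.ofReal with hRcdef
  have hRc : Rc = Q * (g.map Complex.ofReal) * Qᵀ := by
    rw [hRcdef, hRdef, mapC_mul, mapC_mul, hQt, hQdef]
  have hRA : Rc * Ac = Ac * Rc := by
    rw [hRc, hAcdef]
    calc Q * (g.map Complex.ofReal) * Qᵀ * (Q * A * Qᵀ)
        = Q * ((g.map Complex.ofReal) * ((Qᵀ * Q) * A)) * Qᵀ := by noncomm_ring
      _ = Q * ((g.map Complex.ofReal) * A) * Qᵀ := by rw [hQtQ, one_mul]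
      _ = Q * (A * (g.map Complex.ofReal)) * Qᵀ := by rw [hgA]
      _ = Q * (A * ((Qᵀ * Q) * (g.map Complex.ofReal))) * Qᵀ := by rw [hQtQ, one_mul]
      _ = Q * A * Qᵀ * (Q * (g.map Complex.ofReal) * Qᵀ) := by noncomm_ring
  have hyne : (R 0 1 : ℂ) ≠ 0 := Complex.ofReal_ne_zero.mpr hd0
  have h00c : (R 0 0 : ℂ) * (R 0 0 : ℂ) + (R 0 1 : ℂ) * (R 0 1 : ℂ) = 1 := by
    exact_mod_cast congrArg Complex.ofReal h00
  have hE : ∀ i j, (∑ k, Rc i k * Ac k j) = ∑ k, Ac i k * Rc k j := by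
    intro i j
    have h := congr_fun (congr_fun hRA i) j
    simpa only [Matrix.mul_apply] using h
  have hRcE : ∀ i j, Rc i j = ((R i j : ℝ) : ℂ) := fun i j => rfl
  have E00 := hE 0 0
  have E01 := hE 0 1
  have E02 := hE 0 2
  have E12 := hE 1 2
  have E20 := hE 2 0
  have E21 := hE 2 1
  simp only [Fin.sum_univ_three, hRcE, he, hf, hR02, hR12, hR20, hR21, hR22] at E00 E01 E02 E12 E20 E21
  push_cast at E00 E01 E02 E12 E20 E21
  have ha10 : Ac 1 0 = -(Ac 0 1) := by
    have hz : (R 0 1 : ℂ) * (Ac 1 0 + Ac 0 1) = 0 := by linear_combination E00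
    rcases mul_eq_zero.mp hz with h | h
    · exact absurd h hyne
    · linear_combination h
  have ha11 : Ac 1 1 = Ac 0 0 := by
    have hz : (R 0 1 : ℂ) * (Ac 1 1 - Ac 0 0) = 0 := by linear_combination E01
    rcases mul_eq_zero.mp hz with h | h
    · exact absurd h hyne
    · linear_combination h
  have h2c : (2 : ℂ) - 2 * (R 0 0 : ℂ) ≠ 0 := by
    intro h
    apply hc1
    have : ((R 0 0 : ℝ) : ℂ) = 1 := by linear_combination -(1/2 : ℂ) * h
    exact_mod_cast this
  have ha02 : Ac 0 2 = 0 := by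
    have hz : ((2 : ℂ) - 2 * (R 0 0 : ℂ)) * Ac 0 2 = 0 := by
      linear_combination ((R 0 0 : ℂ) - 1) * E02 - (R 0 1 : ℂ) * E12 - Ac 0 2 * h00c
    exact (mul_eq_zero.mp hz).resolve_left h2c
  have ha12 : Ac 1 2 = 0 := by
    have hz : ((2 : ℂ) - 2 * (R 0 0 : ℂ)) * Ac 1 2 = 0 := by
      linear_combination ((R 0 1 : ℂ)) * E02 + ((R 0 0 : ℂ) - 1) * E12 - Ac 1 2 * h00c
    exact (mul_eq_zero.mp hz).resolve_left h2c
  have ha20 : Ac 2 0 = 0 := by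
    have hz : ((2 : ℂ) - 2 * (R 0 0 : ℂ)) * Ac 2 0 = 0 := by
      linear_combination ((1 : ℂ) - (R 0 0 : ℂ)) * E20 - (R 0 1 : ℂ) * E21 - Ac 2 0 * h00c
    exact (mul_eq_zero.mp hz).resolve_left h2c
  have ha21 : Ac 2 1 = 0 := by
    have hz : ((2 : ℂ) - 2 * (R 0 0 : ℂ)) * Ac 2 1 = 0 := by
      linear_combination ((R 0 1 : ℂ)) * E20 + ((1 : ℂ) - (R 0 0 : ℂ)) * E21 - Ac 2 1 * h00c
    exact (mul_eq_zero.mp hz).resolve_left h2c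
  -- skew-hermitian and trace facts
  have hQH : Qᴴ = Qᵀ := by
    ext i j
    simp [hQdef, Matrix.conjTranspose_apply, Matrix.map_apply, Complex.conj_ofReal,
      Matrix.transpose_apply]
  have hQTH : (Qᵀ)ᴴ = Q := by
    ext i j
    simp [hQdef, Matrix.conjTranspose_apply, Matrix.map_apply, Complex.conj_ofReal,
      Matrix.transpose_apply]
  have hAcskew : Acᴴ = -Ac := by
    rw [hAcdef, Matrix.conjTranspose_mul, Matrix.conjTranspose_mul, hQTH, hQH, hskew]
    noncomm_ring
  have conj00 : (starRingEnd ℂ) (Ac 0 0) = -(Ac 0 0) := by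
    have := congr_fun (congr_fun hAcskew 0) 0
    simpa [Matrix.conjTranspose_apply, Matrix.neg_apply] using this
  have hreal10 : (starRingEnd ℂ) (Ac 1 0) = Ac 1 0 := by
    have h := congr_fun (congr_fun hAcskew 0) 1
    simp only [Matrix.conjTranspose_apply, Matrix.neg_apply] at h
    exact h.trans (by rw [ha10])
  have htrc : Ac 2 2 = -(2 * Ac 0 0) := by
    have ht0 : Ac.trace = 0 := by
      rw [hAcdef, Matrix.trace_mul_comm, ← mul_assoc, hQtQ, one_mul, htr]
    rw [Matrix.trace_fin_three] at ht0
    rw [ha11] at ht0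
    linear_combination ht0
  -- entries
  have hre00 : (Ac 0 0).re = 0 := by
    have h := congrArg Complex.re conj00
    simp only [Complex.conj_re, Complex.neg_re] at h
    linarith
  have e00 : Ac 0 0 = I * ((Ac 0 0).im : ℂ) := by
    apply Complex.ext <;> simp [hre00]
  have e10 : Ac 1 0 = (((Ac 1 0).re : ℝ) : ℂ) := by
    have := Complex.conj_eq_iff_re.mp hreal10
    exact this.symm
  have e01 : Ac 0 1 = -(((Ac 1 0).re : ℝ) : ℂ) := by
    rw [← e10, ha10, neg_neg]
  have e11 : Ac 1 1 = I * ((Ac 0 0).im : ℂ) := ha11.trans e00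
  have e22 : Ac 2 2 = -2 * I * ((Ac 0 0).im : ℂ) := by
    linear_combination htrc - 2 * e00
  set l : ℝ := (Ac 1 0).re with hl
  set m : ℝ := (Ac 0 0).im with hm
  refine ⟨P, l, m, hPPt, hPdet, ?_⟩
  rw [← hQdef, ← hAcdef]
  conv_lhs => rw [Matrix.eta_fin_three Ac]
  rw [e00, e01, e10, e11, e22, ha02, ha12, ha20, ha21]

/-- under the adjoint (conjugation) action of the standard `SO(3) ⊂ SU(3)` on
`𝔰𝔲(3)`, every element whose stabiliser in `SO(3)` is at least one-dimensional (here: infinite,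
which for a closed subgroup of the compact group `SO(3)` is equivalent to being positive
dimensional) is `SO(3)`-conjugate to a matrix `[[iμ, −λ, 0],[λ, iμ, 0],[0, 0, −2iμ]]`. -/
theorem stmt_19 (A : Matrix (Fin 3) (Fin 3) ℂ)
    (hskew : Aᴴ = -A) (htr : A.trace = 0)
    (hstab : {g : Matrix (Fin 3) (Fin 3) ℝ |
        g * gᵀ = 1 ∧ g.det = 1 ∧ g.map Complex.ofReal * A = A * g.map Complex.ofReal}.Infinite) :
    ∃ (g : Matrix (Fin 3) (Fin 3) ℝ) (l m : ℝ), g * gᵀ = 1 ∧ g.det = 1 ∧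
      g.map Complex.ofReal * A * (g.map Complex.ofReal)ᵀ =
        !![I * m, -l, 0; l, I * m, 0; 0, 0, -2 * I * m] := by
  set S := {g : Matrix (Fin 3) (Fin 3) ℝ |
      g * gᵀ = 1 ∧ g.det = 1 ∧ g.map Complex.ofReal * A = A * g.map Complex.ofReal} with hSdef
  by_cases hsym : ∀ g ∈ S, gᵀ = g
  · exfalso
    apply not_all_symm S hstab (fun g hg => hg.1) (fun g hg => hg.2.1) ?_ hsym
    intro x hx y hy
    refine ⟨?_, ?_, ?_⟩
    · rw [Matrix.transpose_mul]
      calc x * y * (yᵀ * xᵀ) = x * (y * yᵀ) * xᵀ := by noncomm_ring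
        _ = 1 := by rw [hy.1, mul_one, hx.1]
    · rw [Matrix.det_mul, hx.2.1, hy.2.1, mul_one]
    · rw [mapC_mul]
      calc x.map Complex.ofReal * y.map Complex.ofReal * A
          = x.map Complex.ofReal * (A * y.map Complex.ofReal) := by rw [mul_assoc, hy.2.2]
        _ = A * x.map Complex.ofReal * y.map Complex.ofReal := by
            rw [← mul_assoc, hx.2.2]
        _ = A * (x.map Complex.ofReal * y.map Complex.ofReal) := by rw [mul_assoc]
  · push_neg at hsym
    obtain ⟨g, hg, hns⟩ := hsym
    exact main A hskew htr g hg.1 hg.2.1 hg.2.2 hns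
end
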